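/- arXiv:2302.02753 — 3 statements merged into one kernel-verified Lean document; each statement's English description precedes it below -/
import Mathlib

section
/- The Laplace transforms 𝓛̃_a(s) = E_a[e^{−s|C_o^{h*}|}] and 𝓛_a(s) = E_a[e^{−s|C_o^{h*} ∩ 𝕋⁺|}] satisfy the relation 𝓛̃_a(s) = e^{s/d} · 𝓛_a(s)^{(d+1)/d} for all s > 0 and a ≥ h*. -/
open MeasureTheory ProbabilityTheory Real Set Filter Topology NNReal
open scoped Classical ENNReal

noncomputable section

namespace GFF

/-- Vertex set of the `(d+1)`-regular tree `𝕋`: `none` is the root `o`, and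
`some (i, l)` is the vertex reached from the root by first crossing the `i`-th
edge at the root (`i : Fin (d+1)`) and then following the child steps in `l`
(each non-root vertex has `d` children). The fixed neighbour `ō` of the root is
`some (Fin.last d, [])`. -/
abbrev V (d : ℕ) := Option (Fin (d + 1) × List (Fin d))

variable (d : ℕ)

/-- Graph distance from the root `o`. -/
def depth : V d → ℕ := fun v => v.elim 0 fun p => p.2.length + 1

/-- The geodesic path from the root `o` to `v`, including both endpoints. -/
def pathFromRoot : V d → List (V d)
  | none => [none]
  | some (i, l) => none :: (List.range (l.length + 1)).map fun k => some (i, l.take k)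

/-- The forward tree `𝕋⁺`: vertices whose geodesic from `o` does not pass through
the fixed neighbour `ō = some (Fin.last d, [])`. -/
def forward : Set (V d) := {v | v.elim True fun p => p.1 ≠ Fin.last d}

/-- The variance `σ_ν² = d/(d-1)` of the root field value. -/
def varRoot : ℝ≥0 := (d : ℝ≥0) / ((d : ℝ≥0) - 1)

/-- The variance `σ_Y² = (d+1)/d` of the innovations. -/
def varY : ℝ≥0 := ((d : ℝ≥0) + 1) / (d : ℝ≥0)

/-- The Gaussian free field on `𝕋` with root value `a`, built from the innovations
`ω`; this is the closed form of the recursion `φ_o = a`, `φ_x = φ_{x̄}/d + ω_x`,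
where `x̄` is the parent of `x`. -/
def field (a : ℝ) (ω : V d → ℝ) : V d → ℝ
  | none => a
  | some (i, l) =>
      a / (d : ℝ) ^ (l.length + 1) +
        ∑ k ∈ Finset.range (l.length + 1), ω (some (i, l.take k)) / (d : ℝ) ^ (l.length - k)

variable {Ω : Type} [MeasurableSpace Ω]

/-- `(P, Y)` is an environment for the Gaussian free field on `𝕋`: the `Y_x`,
`x ∈ 𝕋`, are independent centred Gaussians with `Var(Y_o) = d/(d-1)` and
`Var(Y_x) = (d+1)/d` for `x ≠ o`.  Under `P`, the field `field d (Y none ω) (Y · ω)`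
then has the law of the GFF on `𝕋` (covariance = Green function), and
`field d a (Y · ω)` has its law conditioned on `φ_o = a`, i.e. `P_a`. -/
structure IsGFFEnv (P : Measure Ω) (Y : V d → Ω → ℝ) : Prop where
  prob : IsProbabilityMeasure P
  meas : ∀ v, Measurable (Y v)
  indep : iIndepFun Y P
  law : ∀ v, P.map (Y v) = gaussianReal 0 (if v = none then varRoot d else varY d)

/-- The connected component `C_o^h` of the root in the level set `{φ ≥ h}`:
on a tree, `v` is connected to `o` in `{φ ≥ h}` iff `φ ≥ h` along the whole
geodesic from `o` to `v`. -/
def cluster (h : ℝ) (φ : V d → ℝ) : Set (V d) :=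
  {v | ∀ z ∈ pathFromRoot d v, h ≤ φ z}

/-- The unconditioned field (root value `Y_o`). -/
def fieldUncond (Y : V d → Ω → ℝ) (ω : Ω) : V d → ℝ :=
  field d (Y none ω) fun v => Y v ω

/-- `η(h,a) = P_a[|C_o^h| = ∞]`. -/
def η (P : Measure Ω) (Y : V d → Ω → ℝ) (h a : ℝ) : ℝ :=
  (P {ω | (cluster d h (field d a fun v => Y v ω)).Infinite}).toReal

/-- `η⁺(h,a) = P_a[|C_o^h ∩ 𝕋⁺| = ∞]`. -/
def ηplus (P : Measure Ω) (Y : V d → Ω → ℝ) (h a : ℝ) : ℝ :=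
  (P {ω | (cluster d h (field d a fun v => Y v ω) ∩ forward d).Infinite}).toReal

/-- The centred Gaussian measure `ν` with variance `d/(d-1)`. -/
def ν : Measure ℝ := gaussianReal 0 (varRoot d)

/-- The centred Gaussian density `ρ_Y` with variance `(d+1)/d`. -/
def ρY : ℝ → ℝ := gaussianPDFReal 0 (varY d)

/-- The operator `L_h` on `L²(ν)`:
`L_h[f](a) = 1_{[h,∞)}(a) · d · ∫_{[h,∞)} f(x) ρ_Y(x − a/d) dx`. -/
def Lop (h : ℝ) (f : ℝ → ℝ) : ℝ → ℝ :=
  (Ici h).indicator fun a => (d : ℝ) * ∫ x in Ici h, f x * ρY d (x - a / d)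

/-- `(hstar, χ)` is the critical pair: `χ = χ_{h*}` is the unique non-negative
unit-`L²(ν)`-norm eigenfunction of `L_{h*}`, continuous and strictly positive on
`[h*,∞)`, vanishing on `(−∞,h*)`, with eigenvalue `λ_{h*} = 1`; this
characterises the critical height `h*` (the unique `h` with `λ_h = 1`). -/
structure IsCriticalPair (hstar : ℝ) (χ : ℝ → ℝ) : Prop where
  cont : ContinuousOn χ (Ici hstar)
  nonneg : ∀ a, 0 ≤ χ a
  pos : ∀ a, hstar ≤ a → 0 < χ a
  zero : ∀ a, a < hstar → χ a = 0
  norm : (∫ a, χ a ^ 2 ∂(ν d)) = 1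
  eigen : ∀ a, Lop d hstar χ a = χ a

/-- The constant `C₁ = Γ(1/2)⁻¹ √( (2d/(d−1)) ⟨1,χ⟩_ν / ⟨χ,χ²⟩_ν )`. -/
def Cone (χ : ℝ → ℝ) : ℝ :=
  (1 / Real.Gamma (1 / 2)) *
    Real.sqrt ((2 * d / (d - 1)) * (∫ a, χ a ∂(ν d)) / (∫ a, χ a ^ 3 ∂(ν d)))

/-- The constant `C₂ = 2 ((d−1)/(d+1)) ⟨Id,χ²⟩_ν / ⟨χ,χ²⟩_ν`. -/
def Ctwo (χ : ℝ → ℝ) : ℝ :=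
  2 * ((d - 1) / (d + 1)) * (∫ a, a * χ a ^ 2 ∂(ν d)) / (∫ a, χ a ^ 3 ∂(ν d))

/-- The critical cluster in the forward tree, `C_o^{h*} ∩ 𝕋⁺`. -/
def fwdCluster (hstar a : ℝ) (Y : V d → Ω → ℝ) (ω : Ω) : Set (V d) :=
  cluster d hstar (field d a fun v => Y v ω) ∩ forward d

/-- The Laplace transform `𝓛_a(s) = E_a[e^{−s|C_o^{h*} ∩ 𝕋⁺|}]` (with
`e^{-s·∞} = 0` for `s > 0` encoded by the `Finite` case split). -/
def laplaceFwd (P : Measure Ω) (Y : V d → Ω → ℝ) (hstar a s : ℝ) : ℝ :=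
  ∫ ω, (if (fwdCluster d hstar a Y ω).Finite
    then Real.exp (-s * (fwdCluster d hstar a Y ω).ncard) else 0) ∂P

/-- The Laplace transform `𝓛̃_a(s) = E_a[e^{−s|C_o^{h*}|}]`. -/
def laplaceFull (P : Measure Ω) (Y : V d → Ω → ℝ) (hstar a s : ℝ) : ℝ :=
  ∫ ω, (if (cluster d hstar (field d a fun v => Y v ω)).Finite
    then Real.exp (-s * (cluster d hstar (field d a fun v => Y v ω)).ncard) else 0) ∂P

/-- `γ_s(a) = 1 − 𝓛_a(s)` for `a ≥ h*`, and `0` for `a < h*`. -/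
def γfun (P : Measure Ω) (Y : V d → Ω → ℝ) (hstar s a : ℝ) : ℝ :=
  if hstar ≤ a then 1 - laplaceFwd d P Y hstar a s else 0

/-- `a₁(s) = ⟨γ_s, χ⟩_ν`. -/
def aone (P : Measure Ω) (Y : V d → Ω → ℝ) (hstar : ℝ) (χ : ℝ → ℝ) (s : ℝ) : ℝ :=
  ∫ a, γfun d P Y hstar s a * χ a ∂(ν d)

/-- The `n`-th generation `Z_n = {x ∈ C_o^{h*} ∩ 𝕋⁺ : d(o,x) = n}`. -/
def gen (hstar a : ℝ) (Y : V d → Ω → ℝ) (ω : Ω) (n : ℕ) : Set (V d) :=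
  {x | x ∈ fwdCluster d hstar a Y ω ∧ depth d x = n}

/-- The shifted Gaussian measure `ν*`, with density `ρ_{ν*}(x) = ρ_ν(x + h*)`. -/
def νstar (hstar : ℝ) : Measure ℝ := gaussianReal (-hstar) (varRoot d)

/-- The operator `H_h[f](a) = ∫_0^∞ f(x) ρ_Y(x − a/d + ((d−1)/d)h) dx` for `a ≥ 0`,
and `0` for `a < 0` (so that `H_h = d⁻¹ θ_h L_h θ_h⁻¹`). -/
def Hop (h : ℝ) (f : ℝ → ℝ) : ℝ → ℝ :=
  (Ici (0:ℝ)).indicator fun a =>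
    ∫ x in Ici (0:ℝ), f x * ρY d (x - a / d + ((d - 1) / d) * h)


section Aux

/-! ### Auxiliary combinatorial layer: the field and cluster restricted to one branch -/

/-- The field on one branch, as a function of the innovations on that branch. -/
def psiB (d : ℕ) (a : ℝ) (y : List (Fin d) → ℝ) (l : List (Fin d)) : ℝ :=
  a / (d : ℝ) ^ (l.length + 1) +
    ∑ k ∈ Finset.range (l.length + 1), y (l.take k) / (d : ℝ) ^ (l.length - k)

lemma field_some (d : ℕ) (a : ℝ) (ω : V d → ℝ) (i : Fin (d + 1)) (l : List (Fin d)) :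
    field d a ω (some (i, l)) = psiB d a (fun m => ω (some (i, m))) l := rfl

/-- The cluster of one branch. -/
def KB (d : ℕ) (h a : ℝ) (y : List (Fin d) → ℝ) : Set (List (Fin d)) :=
  {l | ∀ k ≤ l.length, h ≤ psiB d a y (l.take k)}

lemma psiB_congr (d : ℕ) (a : ℝ) {y y' : List (Fin d) → ℝ} (l : List (Fin d))
    (hyy : ∀ k, y (l.take k) = y' (l.take k)) : psiB d a y l = psiB d a y' l := by
  unfold psiB
  congr 1
  exact Finset.sum_congr rfl fun k _ => by rw [hyy k]

lemma mem_KB_congr (d : ℕ) (h a : ℝ) {y y' : List (Fin d) → ℝ} (l : List (Fin d))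
    (hyy : ∀ k, y (l.take k) = y' (l.take k)) : l ∈ KB d h a y ↔ l ∈ KB d h a y' := by
  unfold KB
  simp only [Set.mem_setOf_eq]
  refine forall₂_congr fun k hk => ?_
  rw [psiB_congr d a (l.take k) fun j => ?_]
  simp only [List.take_take]
  exact hyy _

lemma take_mem_KB (d : ℕ) (h a : ℝ) {y : List (Fin d) → ℝ} {l : List (Fin d)}
    (hl : l ∈ KB d h a y) (m : ℕ) : l.take m ∈ KB d h a y := by
  intro k hk
  rw [List.length_take] at hk
  rw [List.take_take]
  have hkm : k ≤ m := le_trans hk (min_le_left _ _)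
  have hkl : k ≤ l.length := le_trans hk (min_le_right _ _)
  rw [min_eq_left hkm]
  exact hl k hkl

lemma KB_finite_iff (d : ℕ) (h a : ℝ) (y : List (Fin d) → ℝ) :
    (KB d h a y).Finite ↔ ∃ n, ∀ l ∈ KB d h a y, l.length < n := by
  constructor
  · intro hfin
    have himg : (List.length '' KB d h a y).Finite := hfin.image _
    obtain ⟨n, hn⟩ := himg.bddAbove
    exact ⟨n + 1, fun l hl => Nat.lt_succ_of_le (hn ⟨l, hl, rfl⟩)⟩
  · rintro ⟨n, hn⟩
    exact (List.finite_length_lt (Fin d) n).subset fun l hl => hn l hl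

lemma exists_len_of_infinite (d : ℕ) (h a : ℝ) {y : List (Fin d) → ℝ}
    (hinf : ¬ (KB d h a y).Finite) (n : ℕ) : ∃ l ∈ KB d h a y, l.length = n := by
  rw [KB_finite_iff] at hinf
  push_neg at hinf
  obtain ⟨l, hl, hlen⟩ := hinf (n + 1)
  refine ⟨l.take n, take_mem_KB d h a hl n, ?_⟩
  rw [List.length_take]
  omega

/-- Truncated branch cluster. -/
def KBn (d : ℕ) (h a : ℝ) (n : ℕ) (y : List (Fin d) → ℝ) : Set (List (Fin d)) :=
  KB d h a y ∩ {l | l.length < n}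

lemma KBn_finite (d : ℕ) (h a : ℝ) (n : ℕ) (y : List (Fin d) → ℝ) : (KBn d h a n y).Finite :=
  (List.finite_length_lt (Fin d) n).subset fun _ hl => hl.2

lemma le_ncard_KBn (d : ℕ) (h a : ℝ) {y : List (Fin d) → ℝ}
    (hinf : ¬ (KB d h a y).Finite) (n : ℕ) : n ≤ (KBn d h a n y).ncard := by
  obtain ⟨l, hl, hlen⟩ := exists_len_of_infinite d h a hinf n
  have key : ((Finset.range n : Finset ℕ) : Set ℕ).ncard ≤ (KBn d h a n y).ncard := by
    refine Set.ncard_le_ncard_of_injOn (fun k => l.take k) ?_ ?_ (KBn_finite d h a n y)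
    · intro k hk
      simp only [Finset.coe_range, Set.mem_Iio] at hk
      refine ⟨take_mem_KB d h a hl k, ?_⟩
      simp only [Set.mem_setOf_eq, List.length_take]
      omega
    · intro k hk k' hk' he
      simp only [Finset.coe_range, Set.mem_Iio] at hk hk'
      have := congrArg List.length he
      rw [List.length_take, List.length_take] at this
      omega
  rwa [Set.ncard_coe_finset, Finset.card_range] at key

/-- One-branch factors of the Laplace transform integrand. -/
def GB (d : ℕ) (h a s : ℝ) (y : List (Fin d) → ℝ) : ℝ :=
  if (KB d h a y).Finite then Real.exp (-s * (KB d h a y).ncard) else 0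

def GBn (d : ℕ) (h a s : ℝ) (n : ℕ) (y : List (Fin d) → ℝ) : ℝ :=
  Real.exp (-s * (KBn d h a n y).ncard)

lemma GB_nonneg (d : ℕ) (h a s : ℝ) (y : List (Fin d) → ℝ) : 0 ≤ GB d h a s y := by
  unfold GB; split <;> positivity

lemma GBn_nonneg (d : ℕ) (h a s : ℝ) (n : ℕ) (y : List (Fin d) → ℝ) : 0 ≤ GBn d h a s n y :=
  (Real.exp_pos _).le

lemma GBn_le_one (d : ℕ) (h a s : ℝ) (hs : 0 < s) (n : ℕ) (y : List (Fin d) → ℝ) :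
    GBn d h a s n y ≤ 1 := by
  unfold GBn
  rw [← Real.exp_zero]
  apply Real.exp_le_exp.2
  have : (0:ℝ) ≤ (KBn d h a n y).ncard := Nat.cast_nonneg _
  nlinarith

lemma tendsto_GBn (d : ℕ) (h a s : ℝ) (hs : 0 < s) (y : List (Fin d) → ℝ) :
    Filter.Tendsto (fun n => GBn d h a s n y) Filter.atTop (nhds (GB d h a s y)) := by
  by_cases hfin : (KB d h a y).Finite
  · obtain ⟨N, hN⟩ := (KB_finite_iff d h a y).1 hfin
    have hconst : ∀ n ≥ N, GBn d h a s n y = GB d h a s y := by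
      intro n hn
      have : KBn d h a n y = KB d h a y := by
        apply Set.inter_eq_self_of_subset_left
        intro l hl
        exact lt_of_lt_of_le (hN l hl) hn
      rw [GBn, this, GB, if_pos hfin]
    refine Filter.Tendsto.congr' ?_ tendsto_const_nhds
    filter_upwards [Filter.eventually_ge_atTop N] with n hn
    exact (hconst n hn).symm
  · rw [GB, if_neg hfin]
    have hb : ∀ n, GBn d h a s n y ≤ Real.exp (-s * n) := by
      intro n
      apply Real.exp_le_exp.2
      have h1 : (n : ℝ) ≤ (KBn d h a n y).ncard := by
        exact_mod_cast le_ncard_KBn d h a hfin n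
      nlinarith
    have hlim : Filter.Tendsto (fun n : ℕ => Real.exp (-s * n)) Filter.atTop (nhds 0) := by
      apply Real.tendsto_exp_atBot.comp
      apply Filter.Tendsto.const_mul_atTop_of_neg (neg_neg_iff_pos.2 hs)
      exact tendsto_natCast_atTop_atTop
    exact squeeze_zero (fun n => GBn_nonneg d h a s n y) hb hlim

/-- `GBn` only depends on the coordinates of length `< n`. -/
lemma GBn_congr (d : ℕ) (h a s : ℝ) (n : ℕ) {y y' : List (Fin d) → ℝ}
    (hyy : ∀ m : List (Fin d), m.length < n → y m = y' m) :
    GBn d h a s n y = GBn d h a s n y' := by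
  have hK : KBn d h a n y = KBn d h a n y' := by
    unfold KBn
    ext l
    simp only [Set.mem_inter_iff, Set.mem_setOf_eq]
    refine and_congr_left fun hl => ?_
    apply mem_KB_congr
    intro k
    apply hyy
    rw [List.length_take]
    omega
  unfold GBn
  rw [hK]

/-- The finite set of lists of length `< n`. -/
def Ln (d n : ℕ) : Finset (List (Fin d)) := (List.finite_length_lt (Fin d) n).toFinset

lemma mem_Ln (d n : ℕ) (l : List (Fin d)) : l ∈ Ln d n ↔ l.length < n := by
  simp [Ln, Set.Finite.mem_toFinset]

lemma measurable_psiB (d : ℕ) (a : ℝ) (l : List (Fin d)) :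
    Measurable fun y : List (Fin d) → ℝ => psiB d a y l := by
  apply Measurable.add measurable_const
  apply Finset.measurable_sum
  intro k _
  exact (measurable_pi_apply _).div_const _

lemma measurableSet_mem_KB (d : ℕ) (h a : ℝ) (l : List (Fin d)) :
    MeasurableSet {y : List (Fin d) → ℝ | l ∈ KB d h a y} := by
  have : {y : List (Fin d) → ℝ | l ∈ KB d h a y} =
      ⋂ (k : ℕ) (_ : k ≤ l.length), {y | h ≤ psiB d a y (l.take k)} := by
    ext y; simp [KB]
  rw [this]
  refine MeasurableSet.iInter fun k => MeasurableSet.iInter fun _ => ?_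
  exact measurableSet_le measurable_const (measurable_psiB d a _)

lemma ncard_KBn_eq (d : ℕ) (h a : ℝ) (n : ℕ) (y : List (Fin d) → ℝ) :
    (KBn d h a n y).ncard = ((Ln d n).filter (· ∈ KB d h a y)).card := by
  rw [← Set.ncard_coe_finset]
  congr 1
  ext l
  simp only [Finset.coe_filter, Set.mem_setOf_eq, mem_Ln, KBn, Set.mem_inter_iff]
  tauto

lemma measurable_GBn (d : ℕ) (h a s : ℝ) (n : ℕ) : Measurable (GBn d h a s n) := by
  apply Real.measurable_exp.comp
  apply Measurable.const_mul
  have : (fun y : List (Fin d) → ℝ => ((KBn d h a n y).ncard : ℝ)) =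
      fun y => ∑ l ∈ Ln d n, if l ∈ KB d h a y then (1:ℝ) else 0 := by
    funext y
    rw [ncard_KBn_eq d h a n y, Finset.card_filter]
    push_cast
    rfl
  rw [this]
  apply Finset.measurable_sum
  intro l _
  exact Measurable.ite (measurableSet_mem_KB d h a l) measurable_const measurable_const

end Aux


section Aux2

/-! ### Decomposition of the cluster into branches -/

/-- The cluster built from given branch clusters over a set `F` of directions. -/
def SF (d : ℕ) (h a : ℝ) (F : Finset (Fin (d + 1))) (y : Fin (d + 1) → List (Fin d) → ℝ) :
    Set (V d) :=
  insert none (⋃ i ∈ F, (fun l => (some (i, l) : V d)) '' KB d h a (y i))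

lemma some_branch_injective (d : ℕ) (i : Fin (d + 1)) :
    Function.Injective (fun l => (some (i, l) : V d)) := by
  intro l1 l2 hl
  simpa using hl

lemma UF_finite_ncard (d : ℕ) (h a : ℝ) (y : Fin (d + 1) → List (Fin d) → ℝ)
    (F : Finset (Fin (d + 1))) (hfin : ∀ i ∈ F, (KB d h a (y i)).Finite) :
    (⋃ i ∈ F, (fun l => (some (i, l) : V d)) '' KB d h a (y i)).Finite ∧
      (⋃ i ∈ F, (fun l => (some (i, l) : V d)) '' KB d h a (y i)).ncard =
        ∑ i ∈ F, (KB d h a (y i)).ncard := by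
  classical
  induction F using Finset.induction_on with
  | empty => simp
  | insert _ _ hj =>
    rename_i j F' ih
    have hfinF : ∀ i ∈ F', (KB d h a (y i)).Finite := fun i hi => hfin i (Finset.mem_insert_of_mem hi)
    obtain ⟨hUfin, hUcard⟩ := ih hfinF
    have hKj : (KB d h a (y j)).Finite := hfin j (Finset.mem_insert_self _ _)
    rw [Finset.set_biUnion_insert, Finset.sum_insert hj]
    have hdisj : Disjoint ((fun l => (some (j, l) : V d)) '' KB d h a (y j))
        (⋃ i ∈ F', (fun l => (some (i, l) : V d)) '' KB d h a (y i)) := by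
      rw [Set.disjoint_left]
      rintro x ⟨l, _, rfl⟩ hx
      simp only [Set.mem_iUnion] at hx
      obtain ⟨i, hi, l', _, he⟩ := hx
      simp only [Option.some.injEq, Prod.mk.injEq] at he
      exact hj (he.1 ▸ hi)
    refine ⟨(hKj.image _).union hUfin, ?_⟩
    rw [Set.ncard_union_eq hdisj (hKj.image _) hUfin,
      Set.ncard_image_of_injective _ (some_branch_injective d j), hUcard]

lemma SF_integrand (d : ℕ) (h a s : ℝ) (F : Finset (Fin (d + 1)))
    (y : Fin (d + 1) → List (Fin d) → ℝ) :
    (if (SF d h a F y).Finite then Real.exp (-s * (SF d h a F y).ncard) else 0) =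
      Real.exp (-s) * ∏ i ∈ F, GB d h a s (y i) := by
  classical
  by_cases hall : ∀ i ∈ F, (KB d h a (y i)).Finite
  · obtain ⟨hUfin, hUcard⟩ := UF_finite_ncard d h a y F hall
    have hnone : (none : V d) ∉ ⋃ i ∈ F, (fun l => (some (i, l) : V d)) '' KB d h a (y i) := by
      simp only [Set.mem_iUnion]
      rintro ⟨i, hi, l, _, he⟩
      simp at he
    have hSfin : (SF d h a F y).Finite := (hUfin.insert _)
    rw [if_pos hSfin]
    have hScard : (SF d h a F y).ncard = 1 + ∑ i ∈ F, (KB d h a (y i)).ncard := by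
      rw [SF, Set.ncard_insert_of_notMem hnone hUfin, hUcard, add_comm]
    rw [hScard]
    have hprod : ∏ i ∈ F, GB d h a s (y i) =
        ∏ i ∈ F, Real.exp (-s * (KB d h a (y i)).ncard) :=
      Finset.prod_congr rfl fun i hi => by rw [GB, if_pos (hall i hi)]
    rw [hprod, ← Real.exp_sum, ← Real.exp_add]
    congr 1
    push_cast
    rw [mul_add, mul_one, Finset.mul_sum]
  · push_neg at hall
    obtain ⟨i, hi, hinf⟩ := hall
    have hSinf : (SF d h a F y).Infinite := by
      have himg : ((fun l => (some (i, l) : V d)) '' KB d h a (y i)).Infinite := by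
        rw [Set.infinite_image_iff ((some_branch_injective d i).injOn)]
        exact hinf
      refine himg.mono ?_
      refine subset_trans ?_ (Set.subset_insert _ _)
      intro x hx
      exact Set.mem_biUnion hi hx
    rw [if_neg hSinf]
    rw [Finset.prod_eq_zero hi (by rw [GB, if_neg hinf]), mul_zero]

/-- Decomposition of the full cluster. -/
lemma cluster_eq_SF {Ω : Type} (d : ℕ) (h a : ℝ) (ha : h ≤ a) (Y : V d → Ω → ℝ) (ω : Ω) :
    cluster d h (field d a fun v => Y v ω) =
      SF d h a Finset.univ (fun i l => Y (some (i, l)) ω) := by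
  ext v
  match v with
  | none =>
    refine ⟨fun _ => Set.mem_insert _ _, fun _ z hz => ?_⟩
    simp only [pathFromRoot, List.mem_singleton] at hz
    subst hz
    exact ha
  | some (i, l) =>
    simp only [cluster, Set.mem_setOf_eq, SF, Set.mem_insert_iff, Set.mem_iUnion,
      pathFromRoot, List.mem_cons, List.mem_map, List.mem_range]
    constructor
    · intro hcl
      right
      refine ⟨i, Finset.mem_univ i, l, ?_, rfl⟩
      intro k hk
      rw [← field_some d a (fun v => Y v ω) i (l.take k)]
      exact hcl (some (i, l.take k)) (Or.inr ⟨k, by omega, rfl⟩)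
    · rintro (hnone | ⟨i', _, l', hl', he⟩)
      · simp at hnone
      · simp only [Option.some.injEq, Prod.mk.injEq] at he
        obtain ⟨rfl, rfl⟩ := he
        rintro z (rfl | ⟨k, hk, rfl⟩)
        · exact ha
        · rw [field_some d a (fun v => Y v ω) i' (l'.take k)]
          exact hl' k (by omega)

/-- Decomposition of the forward cluster. -/
lemma fwdCluster_eq_SF {Ω : Type} (d : ℕ) (h a : ℝ) (ha : h ≤ a) (Y : V d → Ω → ℝ) (ω : Ω) :
    fwdCluster d h a Y ω =
      SF d h a (Finset.univ.erase (Fin.last d)) (fun i l => Y (some (i, l)) ω) := by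
  classical
  rw [fwdCluster, cluster_eq_SF d h a ha Y ω]
  ext v
  match v with
  | none =>
    simp [SF, forward]
  | some (i, l) =>
    simp only [SF, Set.mem_inter_iff, Set.mem_insert_iff, Set.mem_iUnion, forward,
      Set.mem_setOf_eq, Option.elim]
    constructor
    · rintro ⟨hnone | ⟨i', _, l', hl', he⟩, hfwd⟩
      · simp at hnone
      · simp only [Option.some.injEq, Prod.mk.injEq] at he
        obtain ⟨rfl, rfl⟩ := he
        exact Or.inr ⟨i', ⟨Finset.mem_erase.2 ⟨hfwd, Finset.mem_univ _⟩, l', hl', rfl⟩⟩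
    · rintro (hnone | ⟨i', hi', l', hl', he⟩)
      · simp at hnone
      · simp only [Option.some.injEq, Prod.mk.injEq] at he
        obtain ⟨rfl, rfl⟩ := he
        exact ⟨Or.inr ⟨i', Finset.mem_univ _, l', hl', rfl⟩, (Finset.mem_erase.1 hi').1⟩

end Aux2


section Aux3

variable {Ω : Type} [MeasurableSpace Ω]

/-- Lists of length `< n`, as a finite type. -/
abbrev Dn (d n : ℕ) := {l : List (Fin d) // l.length < n}

instance (d n : ℕ) : Finite (Dn d n) := (List.finite_length_lt (Fin d) n).to_subtype

noncomputable instance (d n : ℕ) : Fintype (Dn d n) := Fintype.ofFinite _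

/-- The joint law of finitely many distinct non-root innovations is the Gaussian
product measure. -/
lemma map_tuple_eq_pi (d : ℕ) (P : Measure Ω) (Y : V d → Ω → ℝ) (hEnv : IsGFFEnv d P Y)
    {κ : Type} [Fintype κ] (e : κ → V d) (he : Function.Injective e)
    (hne : ∀ k, e k ≠ none) :
    P.map (fun ω (k : κ) => Y (e k) ω) =
      Measure.pi (fun _ : κ => gaussianReal 0 (varY d)) := by
  haveI := hEnv.prob
  classical
  refine (Measure.pi_eq fun S hS => ?_).symm
  have hmeas : Measurable (fun ω (k : κ) => Y (e k) ω) :=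
    measurable_pi_lambda _ fun k => hEnv.meas _
  rw [Measure.map_apply hmeas (MeasurableSet.univ_pi hS)]
  set sets : V d → Set ℝ := fun v => if hv : ∃ k, e k = v then S hv.choose else Set.univ
    with hsets
  have hsets_e : ∀ k, sets (e k) = S k := by
    intro k
    have hv : ∃ k', e k' = e k := ⟨k, rfl⟩
    rw [hsets]
    simp only [dif_pos hv]
    exact congrArg S (he hv.choose_spec)
  have hpre : (fun ω (k : κ) => Y (e k) ω) ⁻¹' Set.univ.pi S =
      ⋂ v ∈ Finset.univ.image e, Y v ⁻¹' sets v := by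
    ext ω
    simp only [Set.mem_preimage, Set.mem_pi, Set.mem_univ, forall_true_left, Set.mem_iInter,
      Finset.mem_image]
    constructor
    · rintro hω v ⟨k, _, rfl⟩
      rw [hsets_e k]
      exact hω k
    · intro hω k
      have := hω (e k) ⟨k, Finset.mem_univ _, rfl⟩
      rwa [hsets_e k] at this
  have hsets_meas : ∀ v ∈ Finset.univ.image e, MeasurableSet (sets v) := by
    intro v _
    rw [hsets]
    by_cases hv : ∃ k, e k = v
    · simp only [dif_pos hv]; exact hS _
    · simp only [dif_neg hv]; exact MeasurableSet.univ
  rw [hpre, hEnv.indep.measure_inter_preimage_eq_mul (Finset.univ.image e) hsets_meas,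
    Finset.prod_image (fun k _ k' _ hkk => he hkk)]
  refine Finset.prod_congr rfl fun k _ => ?_
  rw [hsets_e k, ← Measure.map_apply (hEnv.meas _) (hS k), hEnv.law (e k), if_neg (hne k)]

/-- Extension of a tuple indexed by short lists to a full branch configuration. -/
def extendF (d n : ℕ) (z : Dn d n → ℝ) : List (Fin d) → ℝ :=
  fun l => if hl : l.length < n then z ⟨l, hl⟩ else 0

lemma measurable_extendF (d n : ℕ) : Measurable (extendF d n) := by
  apply measurable_pi_lambda
  intro l
  by_cases hl : l.length < n
  · simp only [extendF, dif_pos hl]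
    exact measurable_pi_apply _
  · simp only [extendF, dif_neg hl]
    exact measurable_const

lemma GBn_extendF (d : ℕ) (h a s : ℝ) (n : ℕ) (y : List (Fin d) → ℝ) :
    GBn d h a s n (extendF d n (fun l : Dn d n => y l.1)) = GBn d h a s n y :=
  GBn_congr d h a s n fun m hm => by simp only [extendF, dif_pos hm]

/-- The integral of a truncated branch factor does not depend on the branch. -/
lemma integral_GBn_br (d : ℕ) (P : Measure Ω) (Y : V d → Ω → ℝ) (hEnv : IsGFFEnv d P Y)
    (h a s : ℝ) (n : ℕ) (i : Fin (d + 1)) :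
    ∫ ω, GBn d h a s n (fun l => Y (some (i, l)) ω) ∂P =
      ∫ z, GBn d h a s n (extendF d n z)
        ∂(Measure.pi fun _ : Dn d n => gaussianReal 0 (varY d)) := by
  haveI := hEnv.prob
  have hinj : Function.Injective (fun k : Dn d n => (some (i, k.1) : V d)) := by
    intro k k' hk
    simp only [Option.some.injEq, Prod.mk.injEq, true_and] at hk
    exact Subtype.ext hk
  have hmap := map_tuple_eq_pi d P Y hEnv (fun k : Dn d n => (some (i, k.1) : V d)) hinj
    (fun _ => by simp)
  have hmeas : Measurable (fun ω (k : Dn d n) => Y (some (i, k.1)) ω) :=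
    measurable_pi_lambda _ fun k => hEnv.meas _
  have hgm : Measurable (fun z : Dn d n → ℝ => GBn d h a s n (extendF d n z)) :=
    (measurable_GBn d h a s n).comp (measurable_extendF d n)
  calc ∫ ω, GBn d h a s n (fun l => Y (some (i, l)) ω) ∂P
      = ∫ ω, (fun z : Dn d n → ℝ => GBn d h a s n (extendF d n z))
          (fun k : Dn d n => Y (some (i, k.1)) ω) ∂P := by
        refine integral_congr_ae (Filter.Eventually.of_forall fun ω => ?_)
        exact (GBn_extendF d h a s n (fun l => Y (some (i, l)) ω)).symm
    _ = ∫ z, GBn d h a s n (extendF d n z)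
          ∂(P.map (fun ω (k : Dn d n) => Y (some (i, k.1)) ω)) :=
        (integral_map hmeas.aemeasurable hgm.aestronglyMeasurable).symm
    _ = _ := by rw [hmap]

/-- Factorization of the integral of a product of truncated branch factors. -/
lemma integral_prod_GBn (d : ℕ) (P : Measure Ω) (Y : V d → Ω → ℝ) (hEnv : IsGFFEnv d P Y)
    (h a s : ℝ) (n : ℕ) (F : Finset (Fin (d + 1))) :
    ∫ ω, ∏ i ∈ F, GBn d h a s n (fun l => Y (some (i, l)) ω) ∂P =
      ∏ i ∈ F, ∫ ω, GBn d h a s n (fun l => Y (some (i, l)) ω) ∂P := by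
  haveI := hEnv.prob
  classical
  induction F using Finset.induction_on with
  | empty => simp
  | insert _ _ hj =>
    rename_i j F' ih
    set S : Finset (V d) := Finset.univ.image (fun k : Dn d n => (some (j, k.1) : V d)) with hS
    set T : Finset (V d) :=
      (F' ×ˢ (Finset.univ : Finset (Dn d n))).image
        (fun p => (some (p.1, p.2.1) : V d)) with hT
    have hdisj : Disjoint S T := by
      rw [Finset.disjoint_left]
      intro x hxS hxT
      rw [hS, Finset.mem_image] at hxS
      rw [hT, Finset.mem_image] at hxT
      obtain ⟨k, _, rfl⟩ := hxS
      obtain ⟨p, hp, he⟩ := hxT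
      simp only [Option.some.injEq, Prod.mk.injEq] at he
      rw [Finset.mem_product] at hp
      exact hj (he.1 ▸ hp.1)
    have base := hEnv.indep.indepFun_finset S T hdisj hEnv.meas
    set φS : ({x // x ∈ S} → ℝ) → ℝ := fun z =>
      GBn d h a s n (fun l => if hl : (some (j, l) : V d) ∈ S then z ⟨_, hl⟩ else 0) with hφS
    set φT : ({x // x ∈ T} → ℝ) → ℝ := fun z =>
      ∏ i ∈ F', GBn d h a s n
        (fun l => if hl : (some (i, l) : V d) ∈ T then z ⟨_, hl⟩ else 0) with hφT
    have hmS : Measurable φS := by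
      apply (measurable_GBn d h a s n).comp
      apply measurable_pi_lambda
      intro l
      by_cases hl : (some (j, l) : V d) ∈ S
      · simp only [dif_pos hl]; exact measurable_pi_apply _
      · simp only [dif_neg hl]; exact measurable_const
    have hmT : Measurable φT := by
      apply Finset.measurable_prod
      intro i _
      apply (measurable_GBn d h a s n).comp
      apply measurable_pi_lambda
      intro l
      by_cases hl : (some (i, l) : V d) ∈ T
      · simp only [dif_pos hl]; exact measurable_pi_apply _
      · simp only [dif_neg hl]; exact measurable_const
    have hcomp := base.comp hmS hmT
    have hXeq : (φS ∘ fun ω (v : {x // x ∈ S}) => Y v.1 ω) =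
        fun ω => GBn d h a s n (fun l => Y (some (j, l)) ω) := by
      funext ω
      simp only [Function.comp_apply, hφS]
      refine GBn_congr d h a s n fun m hm => ?_
      have hmem : (some (j, m) : V d) ∈ S :=
        Finset.mem_image.2 ⟨⟨m, hm⟩, Finset.mem_univ _, rfl⟩
      rw [dif_pos hmem]
    have hZeq : (φT ∘ fun ω (v : {x // x ∈ T}) => Y v.1 ω) =
        fun ω => ∏ i ∈ F', GBn d h a s n (fun l => Y (some (i, l)) ω) := by
      funext ω
      simp only [Function.comp_apply, hφT]
      refine Finset.prod_congr rfl fun i hi => ?_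
      refine GBn_congr d h a s n fun m hm => ?_
      have hmem : (some (i, m) : V d) ∈ T :=
        Finset.mem_image.2 ⟨(i, ⟨m, hm⟩), Finset.mem_product.2 ⟨hi, Finset.mem_univ _⟩, rfl⟩
      rw [dif_pos hmem]
    rw [hXeq, hZeq] at hcomp
    have hXm : Measurable (fun ω => GBn d h a s n (fun l => Y (some (j, l)) ω)) :=
      (measurable_GBn d h a s n).comp (measurable_pi_lambda _ fun l => hEnv.meas _)
    have hZm : Measurable (fun ω => ∏ i ∈ F', GBn d h a s n (fun l => Y (some (i, l)) ω)) :=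
      Finset.measurable_prod _ fun i _ =>
        (measurable_GBn d h a s n).comp (measurable_pi_lambda _ fun l => hEnv.meas _)
    have hmul := hcomp.integral_mul_eq_mul_integral
      hXm.aestronglyMeasurable hZm.aestronglyMeasurable
    have hsplit : (fun ω => ∏ i ∈ insert j F', GBn d h a s n (fun l => Y (some (i, l)) ω)) =
        (fun ω => GBn d h a s n (fun l => Y (some (j, l)) ω)) *
          (fun ω => ∏ i ∈ F', GBn d h a s n (fun l => Y (some (i, l)) ω)) := by
      funext ω
      simp only [Pi.mul_apply]
      exact Finset.prod_insert hj
    calc ∫ ω, ∏ i ∈ insert j F', GBn d h a s n (fun l => Y (some (i, l)) ω) ∂P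
        = ∫ ω, ((fun ω => GBn d h a s n (fun l => Y (some (j, l)) ω)) *
            (fun ω => ∏ i ∈ F', GBn d h a s n (fun l => Y (some (i, l)) ω))) ω ∂P := by
          rw [hsplit]
      _ = (∫ ω, GBn d h a s n (fun l => Y (some (j, l)) ω) ∂P) *
            ∫ ω, ∏ i ∈ F', GBn d h a s n (fun l => Y (some (i, l)) ω) ∂P := hmul
      _ = _ := by rw [ih, Finset.prod_insert hj]

/-- The integral of a product of branch factors is a power of a single branch integral. -/
lemma integral_prod_GB (d : ℕ) (P : Measure Ω) (Y : V d → Ω → ℝ) (hEnv : IsGFFEnv d P Y)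
    (h a s : ℝ) (hs : 0 < s) (F : Finset (Fin (d + 1))) :
    ∫ ω, ∏ i ∈ F, GB d h a s (fun l => Y (some (i, l)) ω) ∂P =
      (∫ ω, GB d h a s (fun l => Y (some ((0 : Fin (d + 1)), l)) ω) ∂P) ^ F.card := by
  haveI := hEnv.prob
  have hGBnm : ∀ (n : ℕ) (i : Fin (d + 1)),
      Measurable fun ω => GBn d h a s n (fun l => Y (some (i, l)) ω) := fun n i =>
    (measurable_GBn d h a s n).comp (measurable_pi_lambda _ fun l => hEnv.meas _)
  have htend : ∀ F' : Finset (Fin (d + 1)),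
      Filter.Tendsto (fun n => ∫ ω, ∏ i ∈ F', GBn d h a s n (fun l => Y (some (i, l)) ω) ∂P)
        Filter.atTop
        (nhds (∫ ω, ∏ i ∈ F', GB d h a s (fun l => Y (some (i, l)) ω) ∂P)) := by
    intro F'
    apply tendsto_integral_of_dominated_convergence (bound := fun _ => (1 : ℝ))
    · intro n
      exact (Finset.measurable_prod _ fun i _ => hGBnm n i).aestronglyMeasurable
    · exact integrable_const 1
    · intro n
      refine Filter.Eventually.of_forall fun ω => ?_
      rw [Real.norm_eq_abs, abs_of_nonneg (Finset.prod_nonneg fun i _ => GBn_nonneg d h a s n _)]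
      exact Finset.prod_le_one (fun i _ => GBn_nonneg d h a s n _)
        (fun i _ => GBn_le_one d h a s hs n _)
    · refine Filter.Eventually.of_forall fun ω => ?_
      exact tendsto_finset_prod F' fun i _ => tendsto_GBn d h a s hs _
  have hseq : ∀ n : ℕ, ∫ ω, ∏ i ∈ F, GBn d h a s n (fun l => Y (some (i, l)) ω) ∂P =
      (∫ ω, GBn d h a s n (fun l => Y (some ((0 : Fin (d + 1)), l)) ω) ∂P) ^ F.card := by
    intro n
    rw [integral_prod_GBn d P Y hEnv h a s n F]
    rw [Finset.prod_congr rfl fun i _ => (integral_GBn_br d P Y hEnv h a s n i).trans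
      (integral_GBn_br d P Y hEnv h a s n 0).symm]
    exact Finset.prod_const _
  have h0 : Filter.Tendsto
      (fun n => ∫ ω, GBn d h a s n (fun l => Y (some ((0 : Fin (d + 1)), l)) ω) ∂P)
      Filter.atTop
      (nhds (∫ ω, GB d h a s (fun l => Y (some ((0 : Fin (d + 1)), l)) ω) ∂P)) := by
    have := htend {0}
    simpa using this
  have h1 := (h0.pow F.card)
  have h2 := htend F
  rw [show (fun n => ∫ ω, ∏ i ∈ F, GBn d h a s n (fun l => Y (some (i, l)) ω) ∂P) =
      (fun n => (∫ ω, GBn d h a s n (fun l => Y (some ((0 : Fin (d + 1)), l)) ω) ∂P) ^ F.card)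
    from funext hseq] at h2
  exact tendsto_nhds_unique h2 h1

end Aux3

/-- the Laplace transforms `𝓛̃_a(s) = E_a[e^{−s|C_o^{h*}|}]` and
`𝓛_a(s) = E_a[e^{−s|C_o^{h*} ∩ 𝕋⁺|}]` satisfy
`𝓛̃_a(s) = e^{s/d} 𝓛_a(s)^{(d+1)/d}` for all `s > 0`, `a ≥ h*`. -/
theorem laplace_full_forward_relation {Ω : Type} [MeasurableSpace Ω] (d : ℕ) (hd : 2 ≤ d)
    (P : Measure Ω) (Y : V d → Ω → ℝ) (hEnv : IsGFFEnv d P Y)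
    (hstar : ℝ) (χ : ℝ → ℝ) (hcrit : IsCriticalPair d hstar χ)
    (s : ℝ) (hs : 0 < s) (a : ℝ) (ha : hstar ≤ a) :
    laplaceFull d P Y hstar a s =
      Real.exp (s / d) * laplaceFwd d P Y hstar a s ^ (((d : ℝ) + 1) / d) := by
  haveI := hEnv.prob
  classical
  set m := ∫ ω, GB d hstar a s (fun l => Y (some ((0 : Fin (d + 1)), l)) ω) ∂P with hm
  have hm0 : 0 ≤ m := integral_nonneg fun ω => GB_nonneg d hstar a s _
  have hfull : laplaceFull d P Y hstar a s = Real.exp (-s) * m ^ (d + 1) := by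
    rw [laplaceFull]
    have heq : ∀ ω : Ω,
        (if (cluster d hstar (field d a fun v => Y v ω)).Finite
          then Real.exp (-s * (cluster d hstar (field d a fun v => Y v ω)).ncard) else 0) =
        Real.exp (-s) * ∏ i ∈ Finset.univ, GB d hstar a s (fun l => Y (some (i, l)) ω) := by
      intro ω
      rw [cluster_eq_SF d hstar a ha Y ω]
      exact SF_integrand d hstar a s Finset.univ _
    rw [integral_congr_ae (Filter.Eventually.of_forall heq), integral_const_mul,
      integral_prod_GB d P Y hEnv hstar a s hs Finset.univ, Finset.card_univ,
      Fintype.card_fin]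
  have hfwd : laplaceFwd d P Y hstar a s = Real.exp (-s) * m ^ d := by
    rw [laplaceFwd]
    have heq : ∀ ω : Ω,
        (if (fwdCluster d hstar a Y ω).Finite
          then Real.exp (-s * (fwdCluster d hstar a Y ω).ncard) else 0) =
        Real.exp (-s) * ∏ i ∈ Finset.univ.erase (Fin.last d),
          GB d hstar a s (fun l => Y (some (i, l)) ω) := by
      intro ω
      rw [fwdCluster_eq_SF d hstar a ha Y ω]
      exact SF_integrand d hstar a s _ _
    rw [integral_congr_ae (Filter.Eventually.of_forall heq), integral_const_mul,
      integral_prod_GB d P Y hEnv hstar a s hs _,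
      Finset.card_erase_of_mem (Finset.mem_univ _), Finset.card_univ, Fintype.card_fin]
    norm_num
    rfl
  have hdne : (d : ℝ) ≠ 0 := by
    have : 0 < d := by omega
    exact_mod_cast this.ne'
  rw [hfull, hfwd]
  rw [Real.mul_rpow (Real.exp_nonneg _) (pow_nonneg hm0 _)]
  have e1 : Real.exp (-s) ^ (((d : ℝ) + 1) / d) = Real.exp (-s * (((d : ℝ) + 1) / d)) :=
    (Real.exp_mul _ _).symm
  have e2 : (m ^ d : ℝ) ^ (((d : ℝ) + 1) / d) = m ^ (d + 1) := by
    rw [← Real.rpow_natCast m d, ← Real.rpow_mul hm0]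
    have harg : (d : ℝ) * (((d : ℝ) + 1) / d) = (d : ℝ) + 1 := by field_simp
    rw [harg, show ((d : ℝ) + 1) = ((d + 1 : ℕ) : ℝ) by push_cast; ring, Real.rpow_natCast]
  rw [e1, e2, ← mul_assoc, ← Real.exp_add]
  have harg2 : s / d + -s * (((d : ℝ) + 1) / d) = -s := by
    field_simp
    ring
  rw [harg2]

end GFF
end
end

section
/- For every a ≥ h*, every H ≥ h* and every integer N ≥ 1 it holds P_a[𝒜 ∩ 𝒞_H ∩ 𝒟_N] = 0, where 𝒜 = {|C_o^{h*} ∩ 𝕋⁺| = ∞}, 𝒞_H = {Φ_n ≤ H for all n ≥ 0} and 𝒟_N = {|Z_n| ≤ N for all n ≥ 0}, with Z_n = {x ∈ C_o^{h*} ∩ 𝕋⁺ : d(o,x) = n} and Φ_n = max_{x ∈ Z_n} φ_x (max ∅ = −∞). -/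
open MeasureTheory ProbabilityTheory Real Set Filter Topology NNReal
open scoped Classical ENNReal

noncomputable section

namespace GFF

variable (d : ℕ)

variable {Ω : Type} [MeasurableSpace Ω]

/-! ### Auxiliary material for Statement 13 -/

/-- The parent of a vertex (`none` is its own parent). -/
def parent : V d → V d
  | none => none
  | some (i, l) => if l = [] then none else some (i, l.dropLast)

/-- The `j`-th forward child of a vertex. -/
def chMap (v : V d) (j : Fin d) : V d :=
  match v with
  | none => some (j.castSucc, [])
  | some (i, l) => some (i, l ++ [j])

lemma mem_pathFromRoot_iff (i : Fin (d + 1)) (l : List (Fin d)) (z : V d) :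
    z ∈ pathFromRoot d (some (i, l)) ↔ z = none ∨ ∃ k ≤ l.length, z = some (i, l.take k) := by
  simp only [pathFromRoot, List.mem_cons, List.mem_map, List.mem_range, Nat.lt_succ_iff]
  constructor
  · rintro (h | ⟨k, hk, rfl⟩)
    · exact Or.inl h
    · exact Or.inr ⟨k, hk, rfl⟩
  · rintro (h | ⟨k, hk, rfl⟩)
    · exact Or.inl h
    · exact Or.inr ⟨k, hk, rfl⟩

lemma mem_pathFromRoot_self (v : V d) : v ∈ pathFromRoot d v := by
  cases v with
  | none => simp [pathFromRoot]
  | some p =>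
    obtain ⟨i, l⟩ := p
    rw [mem_pathFromRoot_iff]
    exact Or.inr ⟨l.length, le_rfl, by rw [List.take_length]⟩

lemma none_mem_pathFromRoot (v : V d) : (none : V d) ∈ pathFromRoot d v := by
  cases v with
  | none => simp [pathFromRoot]
  | some p => obtain ⟨i, l⟩ := p; rw [mem_pathFromRoot_iff]; exact Or.inl rfl

lemma depth_le_of_mem_pathFromRoot {z v : V d} (h : z ∈ pathFromRoot d v) :
    depth d z ≤ depth d v := by
  cases v with
  | none => simp [pathFromRoot] at h; subst h; exact le_rfl
  | some p =>
    obtain ⟨i, l⟩ := p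
    rw [mem_pathFromRoot_iff] at h
    rcases h with rfl | ⟨k, hk, rfl⟩
    · simp [depth]
    · simp only [depth, Option.elim_some, List.length_take]
      omega

lemma cluster_ancestor {h : ℝ} {φ : V d → ℝ} {x z : V d} (hx : x ∈ cluster d h φ)
    (hz : z ∈ pathFromRoot d x) : z ∈ cluster d h φ := by
  intro w hw
  apply hx
  cases x with
  | none =>
    simp [pathFromRoot] at hz; subst hz
    exact hw
  | some p =>
    obtain ⟨i, l⟩ := p
    rw [mem_pathFromRoot_iff] at hz
    rcases hz with rfl | ⟨k, hk, rfl⟩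
    · simp [pathFromRoot] at hw; subst hw; exact none_mem_pathFromRoot d _
    · rw [mem_pathFromRoot_iff] at hw
      rcases hw with rfl | ⟨k', _hk', rfl⟩
      · exact none_mem_pathFromRoot d _
      · rw [List.take_take, mem_pathFromRoot_iff]
        exact Or.inr ⟨min k' k, le_trans (min_le_right _ _) hk, rfl⟩

lemma parent_mem_pathFromRoot (v : V d) : parent d v ∈ pathFromRoot d v := by
  cases v with
  | none => simp [pathFromRoot, parent]
  | some p =>
    obtain ⟨i, l⟩ := p
    by_cases hl : l = []
    · subst hl; simp [parent]; exact none_mem_pathFromRoot d _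
    · rw [mem_pathFromRoot_iff]
      refine Or.inr ⟨l.length - 1, by omega, ?_⟩
      simp [parent, hl, List.dropLast_eq_take]

lemma depth_parent {v : V d} {n : ℕ} (hv : depth d v = n + 1) :
    depth d (parent d v) = n := by
  cases v with
  | none => simp [depth] at hv
  | some p =>
    obtain ⟨i, l⟩ := p
    simp only [depth, Option.elim_some] at hv
    by_cases hl : l = []
    · subst hl; simp at hv; simp [parent, depth, ← hv]
    · have hlen : l.length ≠ 0 := fun h => hl (List.eq_nil_of_length_eq_zero h)
      simp [parent, hl, depth]
      omega

lemma parent_forward {v : V d} (hv : v ∈ forward d) : parent d v ∈ forward d := by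
  cases v with
  | none => simp [parent, forward]
  | some p =>
    obtain ⟨i, l⟩ := p
    by_cases hl : l = [] <;> · simp [parent, hl, forward] at hv ⊢; try exact hv

lemma field_succ (a : ℝ) (ω : V d → ℝ) (i : Fin (d + 1)) (l : List (Fin d)) :
    field d a ω (some (i, l)) =
      field d a ω (parent d (some (i, l))) / d + ω (some (i, l)) := by
  by_cases hl : l = []
  · subst hl
    simp [field, parent]
  · have hlen : l.length ≠ 0 := fun h => hl (List.eq_nil_of_length_eq_zero h)
    have hpar : parent d (some (i, l)) = some (i, l.dropLast) := by simp [parent, hl]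
    rw [hpar]
    simp only [field, List.length_dropLast]
    have h1 : l.length - 1 + 1 = l.length := by omega
    have hsum : ∑ k ∈ Finset.range l.length,
          ω (some (i, l.dropLast.take k)) / (d : ℝ) ^ (l.length - 1 - k) / (d : ℝ)
        = ∑ k ∈ Finset.range l.length, ω (some (i, l.take k)) / (d : ℝ) ^ (l.length - k) := by
      apply Finset.sum_congr rfl
      intro k hk
      rw [Finset.mem_range] at hk
      rw [List.dropLast_eq_take, List.take_take, min_eq_left (by omega), div_div, ← pow_succ]
      congr 2
      omega
    rw [Finset.sum_range_succ, List.take_length, Nat.sub_self, pow_zero, div_one, add_div,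
      Finset.sum_div, h1, hsum, div_div, ← pow_succ, ← add_assoc]

lemma chMap_spec {n : ℕ} {x : V d} (hx : x ∈ forward d) (hdx : depth d x = n + 1) :
    ∃ j : Fin d, x = chMap d (parent d x) j := by
  cases x with
  | none => simp [depth] at hdx
  | some p =>
    obtain ⟨i, l⟩ := p
    by_cases hl : l = []
    · subst hl
      have hi : i ≠ Fin.last d := hx
      refine ⟨i.castPred hi, ?_⟩
      simp [parent, chMap, Fin.castSucc_castPred]
    · refine ⟨l.getLast hl, ?_⟩
      simp only [parent, hl, if_false, chMap]
      rw [List.dropLast_append_getLast hl]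

lemma chMap_forward {v : V d} (hv : v ∈ forward d) (j : Fin d) : chMap d v j ∈ forward d := by
  cases v with
  | none => exact (Fin.castSucc_lt_last j).ne
  | some p => obtain ⟨i, l⟩ := p; exact hv

lemma depth_chMap {v : V d} {n : ℕ} (hv : depth d v = n) (j : Fin d) :
    depth d (chMap d v j) = n + 1 := by
  cases v with
  | none => simp [depth, chMap] at hv ⊢; omega
  | some p =>
    obtain ⟨i, l⟩ := p
    simp [depth, chMap] at hv ⊢
    omega

lemma parent_chMap (v : V d) (j : Fin d) : parent d (chMap d v j) = v := by
  cases v with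
  | none => simp [chMap, parent]
  | some p =>
    obtain ⟨i, l⟩ := p
    simp [chMap, parent, List.dropLast_concat]

lemma fwd_depth_finite (n : ℕ) : {v : V d | v ∈ forward d ∧ depth d v = n}.Finite := by
  have h1 : {l : List (Fin d) | l.length ≤ n}.Finite := List.finite_length_le _ n
  have h2 : ((Set.univ : Set (Fin (d + 1))) ×ˢ {l : List (Fin d) | l.length ≤ n}).Finite :=
    (Set.finite_univ).prod h1
  apply Set.Finite.subset ((h2.image (fun p => (some p : V d))).insert none)
  rintro v ⟨_, hdv⟩
  cases v with
  | none => exact Set.mem_insert _ _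
  | some p =>
    obtain ⟨i, l⟩ := p
    refine Set.mem_insert_of_mem _ ⟨(i, l), ⟨trivial, ?_⟩, rfl⟩
    simp only [depth, Option.elim_some] at hdv
    simp only [Set.mem_setOf_eq]
    omega

/-- The finite set of forward vertices at depth `n`. -/
def W (n : ℕ) : Finset (V d) := (fwd_depth_finite d n).toFinset

lemma mem_W {n : ℕ} {v : V d} : v ∈ W d n ↔ v ∈ forward d ∧ depth d v = n := by
  simp [W, Set.Finite.mem_toFinset]

/-- The generation `Z_n` as a finset. -/
def gfin (hstar a : ℝ) (Y : V d → Ω → ℝ) (n : ℕ) (ω : Ω) : Finset (V d) :=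
  (W d n).filter fun v => v ∈ fwdCluster d hstar a Y ω

lemma mem_gfin {hstar a : ℝ} {Y : V d → Ω → ℝ} {n : ℕ} {ω : Ω} {v : V d} :
    v ∈ gfin d hstar a Y n ω ↔ v ∈ fwdCluster d hstar a Y ω ∧ depth d v = n := by
  simp only [gfin, Finset.mem_filter, mem_W]
  constructor
  · rintro ⟨⟨h1, h2⟩, h3⟩; exact ⟨h3, h2⟩
  · rintro ⟨h1, h2⟩; exact ⟨⟨h1.2, h2⟩, h1⟩

lemma coe_gfin (hstar a : ℝ) (Y : V d → Ω → ℝ) (n : ℕ) (ω : Ω) :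
    (↑(gfin d hstar a Y n ω) : Set (V d)) = gen d hstar a Y ω n := by
  ext v
  simp only [Finset.mem_coe, mem_gfin, gen, Set.mem_setOf_eq]

lemma parent_mem_fwdCluster {hstar a : ℝ} {Y : V d → Ω → ℝ} {ω : Ω} {x : V d}
    (hx : x ∈ fwdCluster d hstar a Y ω) : parent d x ∈ fwdCluster d hstar a Y ω :=
  ⟨cluster_ancestor d hx.1 (parent_mem_pathFromRoot d x), parent_forward d hx.2⟩

/-- The forward children at depth `n+1` of vertices of `T`. -/
def Ch (n : ℕ) (T : Finset (V d)) : Finset (V d) :=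
  (W d (n + 1)).filter fun x => parent d x ∈ T

lemma Ch_card_le (n : ℕ) (T : Finset (V d)) : (Ch d n T).card ≤ d * T.card := by
  have hsub : Ch d n T ⊆ T.biUnion fun v => Finset.image (chMap d v) Finset.univ := by
    intro x hx
    rw [Ch, Finset.mem_filter] at hx
    obtain ⟨hW, hpar⟩ := hx
    rw [mem_W d] at hW
    obtain ⟨j, hj⟩ := chMap_spec d hW.1 hW.2
    exact Finset.mem_biUnion.2 ⟨parent d x, hpar, Finset.mem_image.2 ⟨j, Finset.mem_univ _, hj.symm⟩⟩
  calc (Ch d n T).card ≤ (T.biUnion fun v => Finset.image (chMap d v) Finset.univ).card :=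
        Finset.card_le_card hsub
    _ ≤ ∑ v ∈ T, (Finset.image (chMap d v) Finset.univ).card := Finset.card_biUnion_le
    _ ≤ ∑ v ∈ T, d := Finset.sum_le_sum fun v _ =>
        le_trans Finset.card_image_le (by simp)
    _ = d * T.card := by rw [Finset.sum_const, smul_eq_mul, mul_comm]

lemma Ch_nonempty (hd : 1 ≤ d) {n : ℕ} {T : Finset (V d)} (hT : T.Nonempty)
    (hTW : T ⊆ W d n) : (Ch d n T).Nonempty := by
  obtain ⟨v, hv⟩ := hT
  have hvW := (mem_W d).1 (hTW hv)
  refine ⟨chMap d v ⟨0, hd⟩, ?_⟩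
  rw [Ch, Finset.mem_filter, mem_W d]
  exact ⟨⟨chMap_forward d hvW.1 _, depth_chMap d hvW.2 _⟩, by rw [parent_chMap]; exact hv⟩

section Meas

variable {m' : MeasurableSpace Ω} {a hstar H : ℝ} {Y : V d → Ω → ℝ} {n : ℕ}

lemma measurable_field_aux (hY : ∀ v : V d, depth d v ≤ n → Measurable[m'] (Y v))
    {z : V d} (hz : depth d z ≤ n) (a : ℝ) :
    Measurable[m'] fun ω => field d a (fun v => Y v ω) z := by
  cases z with
  | none => exact measurable_const
  | some p =>
    obtain ⟨i, l⟩ := p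
    show Measurable[m'] fun ω => _ + _
    apply Measurable.add measurable_const
    apply Finset.measurable_sum
    intro k hk
    rw [Finset.mem_range] at hk
    have hdk : depth d (some (i, l.take k)) ≤ n := by
      refine le_trans ?_ hz
      simp only [depth, Option.elim_some, List.length_take]
      omega
    exact (hY _ hdk).div_const _

lemma measurableSet_mem_fwdCluster_aux (hY : ∀ v : V d, depth d v ≤ n → Measurable[m'] (Y v))
    {v : V d} (hv : depth d v ≤ n) :
    MeasurableSet[m'] {ω | v ∈ fwdCluster d hstar a Y ω} := by
  by_cases hf : v ∈ forward d
  · have : {ω | v ∈ fwdCluster d hstar a Y ω} =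
        ⋂ z ∈ {z | z ∈ pathFromRoot d v}, {ω | hstar ≤ field d a (fun u => Y u ω) z} := by
      ext ω
      simp only [Set.mem_iInter, Set.mem_setOf_eq]
      constructor
      · intro h z hz; exact h.1 z hz
      · intro h; exact ⟨fun z hz => h z hz, hf⟩
    rw [this]
    refine MeasurableSet.biInter ((pathFromRoot d v).finite_toSet.countable) fun z hz => ?_
    exact measurableSet_le measurable_const
      (measurable_field_aux d hY (le_trans (depth_le_of_mem_pathFromRoot d hz) hv) a)
  · have : {ω | v ∈ fwdCluster d hstar a Y ω} = ∅ := by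
      ext ω; simp only [Set.mem_setOf_eq, Set.mem_empty_iff_false, iff_false]
      exact fun h => hf h.2
    rw [this]; exact MeasurableSet.empty

lemma measurableSet_gfin_eq_aux (hY : ∀ v : V d, depth d v ≤ n → Measurable[m'] (Y v))
    {k : ℕ} (hk : k ≤ n) (T : Finset (V d)) :
    MeasurableSet[m'] {ω | gfin d hstar a Y k ω = T} := by
  by_cases hT : T ⊆ W d k
  · have : {ω | gfin d hstar a Y k ω = T} = ⋂ v ∈ W d k,
        (if v ∈ T then {ω | v ∈ fwdCluster d hstar a Y ω}
         else {ω | v ∈ fwdCluster d hstar a Y ω}ᶜ) := by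
      ext ω
      simp only [Set.mem_setOf_eq, Set.mem_iInter]
      constructor
      · intro h v hv
        by_cases hvT : v ∈ T <;> simp only [hvT, if_true, if_false]
        · rw [← h] at hvT
          exact (Finset.mem_filter.1 hvT).2
        · intro hmem
          exact hvT (h ▸ (Finset.mem_filter.2 ⟨hv, hmem⟩))
      · intro h
        ext v
        rw [gfin, Finset.mem_filter]
        constructor
        · rintro ⟨hv, hmem⟩
          have := h v hv
          by_cases hvT : v ∈ T
          · exact hvT
          · rw [if_neg hvT] at this; exact absurd hmem this
        · intro hvT
          have hv := hT hvT
          have := h v hv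
          rw [if_pos hvT] at this
          exact ⟨hv, this⟩
    rw [this]
    refine (W d k).measurableSet_biInter fun v hv => ?_
    have hdv : depth d v ≤ n := le_trans (le_of_eq ((mem_W d).1 hv).2) hk
    by_cases hvT : v ∈ T <;> simp only [hvT, if_true, if_false]
    · exact measurableSet_mem_fwdCluster_aux d hY hdv
    · exact (measurableSet_mem_fwdCluster_aux d hY hdv).compl
  · have : {ω | gfin d hstar a Y k ω = T} = ∅ := by
      ext ω
      simp only [Set.mem_setOf_eq, Set.mem_empty_iff_false, iff_false]
      intro h
      exact hT (h ▸ Finset.filter_subset _ _)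
    rw [this]; exact MeasurableSet.empty

lemma measurableSet_gfin_pred_aux (hY : ∀ v : V d, depth d v ≤ n → Measurable[m'] (Y v))
    {k : ℕ} (hk : k ≤ n) (Q : Finset (V d) → Prop) :
    MeasurableSet[m'] {ω | Q (gfin d hstar a Y k ω)} := by
  have : {ω | Q (gfin d hstar a Y k ω)} =
      ⋃ T ∈ (W d k).powerset.filter Q, {ω | gfin d hstar a Y k ω = T} := by
    ext ω
    simp only [Set.mem_setOf_eq, Set.mem_iUnion, exists_prop, Finset.mem_filter,
      Finset.mem_powerset]
    constructor
    · intro h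
      exact ⟨gfin d hstar a Y k ω, ⟨Finset.filter_subset _ _, h⟩, rfl⟩
    · rintro ⟨T, ⟨_, hQ⟩, rfl⟩
      exact hQ
  rw [this]
  exact ((W d k).powerset.filter Q).measurableSet_biUnion fun T _ =>
    measurableSet_gfin_eq_aux d hY hk T

lemma measurableSet_val_aux (hY : ∀ v : V d, depth d v ≤ n → Measurable[m'] (Y v))
    {k : ℕ} (hk : k ≤ n) :
    MeasurableSet[m'] {ω | ∀ v ∈ W d k,
      v ∈ fwdCluster d hstar a Y ω → field d a (fun u => Y u ω) v ≤ H} := by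
  have : {ω | ∀ v ∈ W d k, v ∈ fwdCluster d hstar a Y ω → field d a (fun u => Y u ω) v ≤ H} =
      ⋂ v ∈ W d k, ({ω | v ∈ fwdCluster d hstar a Y ω}ᶜ ∪
        {ω | field d a (fun u => Y u ω) v ≤ H}) := by
    ext ω
    simp only [Set.mem_setOf_eq, Set.mem_iInter, Set.mem_union, Set.mem_compl_iff]
    refine ⟨fun h v hv => ?_, fun h v hv hmem => ?_⟩
    · by_cases hc : v ∈ fwdCluster d hstar a Y ω
      · exact Or.inr (h v hv hc)
      · exact Or.inl hc
    · rcases h v hv with h' | h'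
      · exact absurd hmem h'
      · exact h'
  rw [this]
  refine (W d k).measurableSet_biInter fun v hv => ?_
  have hdv : depth d v ≤ n := le_trans (le_of_eq ((mem_W d).1 hv).2) hk
  exact ((measurableSet_mem_fwdCluster_aux d hY hdv).compl).union
    (measurableSet_le (measurable_field_aux d hY hdv a) measurable_const)

end Meas

/-- The event that generation `k` is nonempty with at most `N` vertices, all of whose
field values are at most `H`. -/
def Gaux (hstar a H : ℝ) (N : ℕ) (Y : V d → Ω → ℝ) (k : ℕ) : Set Ω :=
  {ω | (gfin d hstar a Y k ω).Nonempty ∧ (gfin d hstar a Y k ω).card ≤ N} ∩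
  {ω | ∀ v ∈ W d k, v ∈ fwdCluster d hstar a Y ω → field d a (fun u => Y u ω) v ≤ H}

def Baux (hstar a H : ℝ) (N : ℕ) (Y : V d → Ω → ℝ) (n : ℕ) : Set Ω :=
  ⋂ k ∈ Finset.range (n + 1), Gaux d hstar a H N Y k

lemma measurableSet_Gaux_aux {m' : MeasurableSpace Ω} {hstar a H : ℝ} {N : ℕ}
    {Y : V d → Ω → ℝ} {n : ℕ} (hY : ∀ v : V d, depth d v ≤ n → Measurable[m'] (Y v))
    {k : ℕ} (hk : k ≤ n) : MeasurableSet[m'] (Gaux d hstar a H N Y k) :=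
  (measurableSet_gfin_pred_aux d hY hk fun T => T.Nonempty ∧ T.card ≤ N).inter
    (measurableSet_val_aux d hY hk)

lemma measurableSet_Baux_aux {m' : MeasurableSpace Ω} {hstar a H : ℝ} {N : ℕ}
    {Y : V d → Ω → ℝ} {n : ℕ} (hY : ∀ v : V d, depth d v ≤ n → Measurable[m'] (Y v))
    {j : ℕ} (hj : j ≤ n) : MeasurableSet[m'] (Baux d hstar a H N Y j) :=
  Finset.measurableSet_biInter _ fun k hk =>
    measurableSet_Gaux_aux d hY (le_trans (Nat.lt_succ_iff.1 (Finset.mem_range.1 hk)) hj)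

lemma mem_forward_some {i : Fin (d + 1)} {l : List (Fin d)}
    (h : (some (i, l) : V d) ∈ forward d) : i ≠ Fin.last d := h

lemma exists_mem_depth {hstar a : ℝ} {Y : V d → Ω → ℝ} {ω : Ω}
    (hinf : (fwdCluster d hstar a Y ω).Infinite) (k : ℕ) :
    ∃ v ∈ fwdCluster d hstar a Y ω, depth d v = k := by
  have hfin : {v : V d | v ∈ forward d ∧ depth d v ≤ k}.Finite := by
    apply Set.Finite.subset (Set.Finite.biUnion (Set.finite_Iic k)
      (fun j _ => fwd_depth_finite d j))
    rintro v ⟨h1, h2⟩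
    exact Set.mem_biUnion h2 ⟨h1, rfl⟩
  have hex : ∃ x ∈ fwdCluster d hstar a Y ω, k < depth d x := by
    by_contra h
    push_neg at h
    exact hinf (Set.Finite.subset hfin fun x hx => ⟨hx.2, h x hx⟩)
  obtain ⟨x, hx, hdx⟩ := hex
  cases x with
  | none => simp [depth] at hdx
  | some p =>
    obtain ⟨i, l⟩ := p
    simp only [depth, Option.elim_some] at hdx
    rcases Nat.eq_zero_or_pos k with hk0 | hk1
    · subst hk0
      exact ⟨none, ⟨cluster_ancestor d hx.1 (none_mem_pathFromRoot d _), trivial⟩, rfl⟩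
    · have hcl : some (i, l.take (k - 1)) ∈
          cluster d hstar (field d a fun v => Y v ω) := by
        apply cluster_ancestor d hx.1
        rw [mem_pathFromRoot_iff]
        exact Or.inr ⟨k - 1, by omega, rfl⟩
      have hfwd : (some (i, l.take (k - 1)) : V d) ∈ forward d := hx.2
      refine ⟨some (i, l.take (k - 1)), ⟨hcl, hfwd⟩, ?_⟩
      simp only [depth, Option.elim_some, List.length_take]
      omega

lemma target_subset_Baux {hstar a H : ℝ} {N : ℕ} {Y : V d → Ω → ℝ} (n : ℕ) :
    ({ω | (fwdCluster d hstar a Y ω).Infinite} ∩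
        {ω | ∀ m : ℕ, ∀ x ∈ gen d hstar a Y ω m, field d a (fun v => Y v ω) x ≤ H} ∩
        {ω | ∀ m : ℕ, (gen d hstar a Y ω m).encard ≤ (N : ℕ∞)}) ⊆
      Baux d hstar a H N Y n := by
  rintro ω ⟨⟨hinf, hval⟩, hcard⟩
  simp only [Baux, Set.mem_iInter]
  intro k _
  refine ⟨⟨?_, ?_⟩, ?_⟩
  · obtain ⟨v, hv, hdv⟩ := exists_mem_depth d hinf k
    exact ⟨v, (mem_gfin d).2 ⟨hv, hdv⟩⟩
  · have h1 := hcard k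
    rw [← coe_gfin d hstar a Y k ω, Set.encard_coe_eq_coe_finsetCard] at h1
    exact_mod_cast h1
  · intro v hv hmem
    exact hval k v ⟨hmem, ((mem_W d).1 hv).2⟩
/-- Lemma `dead_bounded`: for every `a ≥ h*`, `H ≥ h*`, `N ≥ 1`,
`P_a[𝒜 ∩ 𝒞_H ∩ 𝒟_N] = 0`, where `𝒜 = {|C_o^{h*} ∩ 𝕋⁺| = ∞}`,
`𝒞_H = {Φ_n ≤ H ∀ n}` and `𝒟_N = {|Z_n| ≤ N ∀ n}`. -/
theorem no_percolation_on_bounded_event {Ω : Type} [MeasurableSpace Ω] (d : ℕ) (hd : 2 ≤ d)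
    (P : Measure Ω) (Y : V d → Ω → ℝ) (hEnv : IsGFFEnv d P Y)
    (hstar : ℝ) (χ : ℝ → ℝ) (hcrit : IsCriticalPair d hstar χ)
    (a : ℝ) (ha : hstar ≤ a) (H : ℝ) (hH : hstar ≤ H) (N : ℕ) (hN : 1 ≤ N) :
    P ({ω | (fwdCluster d hstar a Y ω).Infinite} ∩
        {ω | ∀ n : ℕ, ∀ x ∈ gen d hstar a Y ω n, field d a (fun v => Y v ω) x ≤ H} ∩
        {ω | ∀ n : ℕ, (gen d hstar a Y ω n).encard ≤ (N : ℕ∞)}) = 0 := by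
  classical
  haveI : IsProbabilityMeasure P := hEnv.prob
  have hd0 : (0 : ℝ) < d := by exact_mod_cast Nat.lt_of_lt_of_le (by norm_num) hd
  set t : ℝ := hstar - H / d with ht
  set p : ℝ≥0∞ := gaussianReal 0 (varY d) (Iio t) with hpdef
  have hvarY : varY d ≠ 0 := by
    have hd' : (d : ℝ≥0) ≠ 0 := Nat.cast_ne_zero.2 (by omega)
    exact div_ne_zero (by positivity) hd'
  have hp0 : p ≠ 0 := by
    intro h0
    have h1 := gaussianReal_absolutelyContinuous' 0 hvarY h0
    rw [Real.volume_Iio] at h1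
    exact ENNReal.top_ne_zero h1
  have hp1 : p ≤ 1 := prob_le_one
  set c : ℝ≥0∞ := 1 - p ^ (d * N) with hcdef
  have hc1 : c < 1 := ENNReal.sub_lt_self ENNReal.one_ne_top one_ne_zero
    (pow_ne_zero _ hp0)
  set B : ℕ → Set Ω := fun n => Baux d hstar a H N Y n with hBdef
  -- σ-algebras of levels
  set M1 : ℕ → MeasurableSpace Ω := fun n =>
    ⨆ v ∈ {v : V d | depth d v ≤ n}, MeasurableSpace.comap (Y v) inferInstance with hM1def
  set M2 : ℕ → MeasurableSpace Ω := fun n =>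
    ⨆ v ∈ {v : V d | depth d v = n + 1}, MeasurableSpace.comap (Y v) inferInstance with hM2def
  have hYM1 : ∀ n (v : V d), depth d v ≤ n → Measurable[M1 n] (Y v) := by
    intro n v hv
    have h1 : MeasurableSpace.comap (Y v) inferInstance ≤ M1 n := by
      rw [hM1def]
      exact le_iSup₂ (f := fun (u : V d) (_ : u ∈ {u : V d | depth d u ≤ n}) =>
        MeasurableSpace.comap (Y u) inferInstance) v hv
    exact (measurable_iff_comap_le.mpr le_rfl).mono h1 le_rfl
  have hYM2 : ∀ n (v : V d), depth d v = n + 1 → Measurable[M2 n] (Y v) := by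
    intro n v hv
    have h1 : MeasurableSpace.comap (Y v) inferInstance ≤ M2 n := by
      rw [hM2def]
      exact le_iSup₂ (f := fun (u : V d) (_ : u ∈ {u : V d | depth d u = n + 1}) =>
        MeasurableSpace.comap (Y u) inferInstance) v hv
    exact (measurable_iff_comap_le.mpr le_rfl).mono h1 le_rfl
  have hkey : ∀ (n : ℕ) (A E : Set Ω), MeasurableSet[M1 n] A → MeasurableSet[M2 n] E →
      P (A ∩ E) = P A * P E := by
    intro n A E hA hE
    have hdisj : Disjoint {v : V d | depth d v ≤ n} {v : V d | depth d v = n + 1} := by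
      rw [Set.disjoint_left]
      intro v hv1 hv2
      simp only [Set.mem_setOf_eq] at hv1 hv2
      omega
    have hind := indep_iSup_of_disjoint
      (m := fun v : V d => MeasurableSpace.comap (Y v) inferInstance)
      (fun v => (hEnv.meas v).comap_le) hEnv.indep hdisj
    exact (Indep_iff _ _ _).1 hind A E hA hE
  -- the step estimate
  have hstep : ∀ n : ℕ, P (B (n + 1)) ≤ c * P (B n) := by
    intro n
    have hBmono : B (n + 1) ⊆ B n := by
      intro ω hω
      simp only [hBdef, Baux, Set.mem_iInter, Finset.mem_range] at hω ⊢
      intro k hk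
      exact hω k (by omega)
    have hdisjT : ∀ T T' : Finset (V d), T ≠ T' →
        Disjoint {ω | gfin d hstar a Y n ω = T} {ω | gfin d hstar a Y n ω = T'} := by
      intro T T' hne
      rw [Set.disjoint_left]
      intro ω h1 h2
      exact hne (h1.symm.trans h2)
    have hpart : ∀ m : ℕ, B m = ⋃ T ∈ (W d n).powerset,
        (B m ∩ {ω | gfin d hstar a Y n ω = T}) := by
      intro m
      ext ω
      simp only [Set.mem_iUnion, Set.mem_inter_iff, exists_prop, Finset.mem_powerset,
        Set.mem_setOf_eq]
      constructor
      · intro h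
        exact ⟨gfin d hstar a Y n ω, Finset.filter_subset _ _, h, rfl⟩
      · rintro ⟨T, _, h, _⟩
        exact h
    have hmeasAmb : ∀ (m : ℕ) (T : Finset (V d)),
        MeasurableSet (B m ∩ {ω | gfin d hstar a Y n ω = T}) := by
      intro m T
      exact (measurableSet_Baux_aux d (fun v _ => hEnv.meas v) (le_refl m)).inter
        (measurableSet_gfin_eq_aux d (fun (v : V d) (_ : depth d v ≤ n) => hEnv.meas v)
          le_rfl T)
    have hsum : ∀ m : ℕ, P (B m) = ∑ T ∈ (W d n).powerset,
        P (B m ∩ {ω | gfin d hstar a Y n ω = T}) := by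
      intro m
      have hpd : ∀ T ∈ (W d n).powerset, ∀ T' ∈ (W d n).powerset, T ≠ T' →
          Disjoint (B m ∩ {ω | gfin d hstar a Y n ω = T})
            (B m ∩ {ω | gfin d hstar a Y n ω = T'}) := fun T _ T' _ hne =>
        Set.disjoint_left.2 fun ω h1 h2 =>
          (Set.disjoint_left.1 (hdisjT T T' hne)) h1.2 h2.2
      have hBU := measure_biUnion_finset (μ := P) hpd (fun T _ => hmeasAmb m T)
      rw [← hBU, ← hpart m]
    have hterm : ∀ T ∈ (W d n).powerset,
        P (B (n + 1) ∩ {ω | gfin d hstar a Y n ω = T}) ≤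
          c * P (B n ∩ {ω | gfin d hstar a Y n ω = T}) := by
      intro T hTpow
      by_cases hcard : T.card ≤ N
      · -- main case
        set D : Set Ω := ⋃ x ∈ Ch d n T, {ω | t ≤ Y x ω} with hDdef
        have hsub : B (n + 1) ∩ {ω | gfin d hstar a Y n ω = T} ⊆
            (B n ∩ {ω | gfin d hstar a Y n ω = T}) ∩ D := by
          rintro ω ⟨hB1, hT⟩
          refine ⟨⟨hBmono hB1, hT⟩, ?_⟩
          have hGn1 : ω ∈ Gaux d hstar a H N Y (n + 1) := by
            simp only [hBdef, Baux, Set.mem_iInter, Finset.mem_range] at hB1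
            exact hB1 (n + 1) (by omega)
          have hGn : ω ∈ Gaux d hstar a H N Y n := by
            simp only [hBdef, Baux, Set.mem_iInter, Finset.mem_range] at hB1
            exact hB1 n (by omega)
          obtain ⟨x, hx⟩ := hGn1.1.1
          have hx' := (mem_gfin d).1 hx
          have hxfwd : x ∈ fwdCluster d hstar a Y ω := hx'.1
          have hxdepth : depth d x = n + 1 := hx'.2
          have hparfwd : parent d x ∈ fwdCluster d hstar a Y ω :=
            parent_mem_fwdCluster d hxfwd
          have hpardepth : depth d (parent d x) = n := depth_parent d hxdepth
          have hparW : parent d x ∈ W d n := (mem_W d).2 ⟨hparfwd.2, hpardepth⟩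
          have hparT : parent d x ∈ T := by
            rw [Set.mem_setOf_eq] at hT
            rw [← hT]
            exact (mem_gfin d).2 ⟨hparfwd, hpardepth⟩
          have hxCh : x ∈ Ch d n T := by
            rw [Ch, Finset.mem_filter]
            exact ⟨(mem_W d).2 ⟨hxfwd.2, hxdepth⟩, hparT⟩
          have hparval : field d a (fun u => Y u ω) (parent d x) ≤ H :=
            hGn.2 (parent d x) hparW hparfwd
          obtain ⟨⟨i, l⟩, rfl⟩ : ∃ q : Fin (d + 1) × List (Fin d), x = some q := by
            cases x with
            | none => simp [depth] at hxdepth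
            | some q => exact ⟨q, rfl⟩
          have hrec := field_succ d a (fun u => Y u ω) i l
          have hxval : hstar ≤ field d a (fun u => Y u ω) (some (i, l)) :=
            hxfwd.1 _ (mem_pathFromRoot_self d _)
          have hYx : ω ∈ {ω | t ≤ Y (some (i, l)) ω} := by
            have hdiv : field d a (fun u => Y u ω) (parent d (some (i, l))) / d ≤ H / d := by
              gcongr
            rw [Set.mem_setOf_eq, ht]
            linarith [hrec]
          exact Set.mem_biUnion hxCh hYx
        have hA : MeasurableSet[M1 n] (B n ∩ {ω | gfin d hstar a Y n ω = T}) :=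
          (measurableSet_Baux_aux d (hYM1 n) le_rfl).inter
            (measurableSet_gfin_eq_aux d (hYM1 n) le_rfl T)
        have hD2 : MeasurableSet[M2 n] D := by
          refine Finset.measurableSet_biUnion _ fun x hx => ?_
          have hdx : depth d x = n + 1 := ((mem_W d).1 (Finset.mem_filter.1 hx).1).2
          exact measurableSet_le measurable_const (hYM2 n x hdx)
        have hPD : P D ≤ c := by
          have hDc : Dᶜ = ⋂ x ∈ Ch d n T, Y x ⁻¹' Iio t := by
            ext ω
            simp [hDdef, not_le]
          have hprod : P (⋂ x ∈ Ch d n T, Y x ⁻¹' Iio t) =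
              ∏ x ∈ Ch d n T, P (Y x ⁻¹' Iio t) :=
            hEnv.indep.meas_biInter fun x hx => ⟨Iio t, measurableSet_Iio, rfl⟩
          have hfac : ∀ x ∈ Ch d n T, P (Y x ⁻¹' Iio t) = p := by
            intro x hx
            have hxW := (mem_W d).1 (Finset.mem_filter.1 hx).1
            have hxne : x ≠ none := by
              intro h
              rw [h] at hxW
              simp [depth, Option.elim] at hxW
            rw [← Measure.map_apply (hEnv.meas x) measurableSet_Iio, hEnv.law x, if_neg hxne]
          have hDmeasAmb : MeasurableSet D :=
            (Ch d n T).measurableSet_biUnion fun x _ =>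
              measurableSet_le measurable_const (hEnv.meas x)
          have hPDc : P Dᶜ = p ^ (Ch d n T).card := by
            rw [hDc, hprod, Finset.prod_congr rfl hfac, Finset.prod_const]
          have hPDeq : P D = 1 - p ^ (Ch d n T).card := by
            have h2 := prob_compl_eq_one_sub (μ := P) hDmeasAmb.compl
            rw [compl_compl, hPDc] at h2
            exact h2
          rw [hPDeq, hcdef]
          apply tsub_le_tsub_left
          apply pow_le_pow_of_le_one zero_le hp1
          calc (Ch d n T).card ≤ d * T.card := Ch_card_le d n T
            _ ≤ d * N := Nat.mul_le_mul_left d hcard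
        calc P (B (n + 1) ∩ {ω | gfin d hstar a Y n ω = T})
            ≤ P ((B n ∩ {ω | gfin d hstar a Y n ω = T}) ∩ D) := measure_mono hsub
          _ = P (B n ∩ {ω | gfin d hstar a Y n ω = T}) * P D := hkey n _ _ hA hD2
          _ ≤ P (B n ∩ {ω | gfin d hstar a Y n ω = T}) * c := mul_le_mul_right hPD _
          _ = c * P (B n ∩ {ω | gfin d hstar a Y n ω = T}) := mul_comm _ _
      · -- degenerate case
        have hempty : B (n + 1) ∩ {ω | gfin d hstar a Y n ω = T} = ∅ := by
          ext ω
          simp only [Set.mem_inter_iff, Set.mem_setOf_eq, Set.mem_empty_iff_false, iff_false,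
            not_and]
          intro hB1 hT
          have hGn : ω ∈ Gaux d hstar a H N Y n := by
            simp only [hBdef, Baux, Set.mem_iInter, Finset.mem_range] at hB1
            exact hB1 n (by omega)
          exact hcard (hT ▸ hGn.1.2)
        rw [hempty]
        simp
    calc P (B (n + 1)) = ∑ T ∈ (W d n).powerset,
          P (B (n + 1) ∩ {ω | gfin d hstar a Y n ω = T}) := hsum (n + 1)
      _ ≤ ∑ T ∈ (W d n).powerset, c * P (B n ∩ {ω | gfin d hstar a Y n ω = T}) :=
          Finset.sum_le_sum hterm
      _ = c * ∑ T ∈ (W d n).powerset, P (B n ∩ {ω | gfin d hstar a Y n ω = T}) := by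
          rw [Finset.mul_sum]
      _ = c * P (B n) := by rw [← hsum n]
  -- geometric decay
  have hBn : ∀ n : ℕ, P (B n) ≤ c ^ n := by
    intro n
    induction n with
    | zero => simpa using prob_le_one
    | succ n ih =>
      calc P (B (n + 1)) ≤ c * P (B n) := hstep n
        _ ≤ c * c ^ n := mul_le_mul_right ih c
        _ = c ^ (n + 1) := by rw [pow_succ, mul_comm]
  have hfinal : ∀ n : ℕ, P ({ω | (fwdCluster d hstar a Y ω).Infinite} ∩
      {ω | ∀ m : ℕ, ∀ x ∈ gen d hstar a Y ω m, field d a (fun v => Y v ω) x ≤ H} ∩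
      {ω | ∀ m : ℕ, (gen d hstar a Y ω m).encard ≤ (N : ℕ∞)}) ≤ c ^ n := fun n =>
    le_trans (measure_mono (target_subset_Baux d n)) (hBn n)
  have hzero := ge_of_tendsto (ENNReal.tendsto_pow_atTop_nhds_zero_of_lt_one hc1)
    (Filter.Eventually.of_forall hfinal)
  exact le_antisymm hzero zero_le

end GFF
end
end

section
/- For all h, s ∈ ℝ there is a constant C_{h,s} < ∞ such that for every f ∈ L²(ν*), ‖θ_s H_h[f]‖_{L^{2d}(ν*)} ≤ C_{h,s} ‖f‖_{L²(ν*)}; in particular θ_s H_h[f] ∈ L^{2d}(ν*). Here θ_s denotes the shift (θ_s g)(x) = g(x + s). -/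
open MeasureTheory ProbabilityTheory Real Set Filter Topology NNReal
open scoped Classical ENNReal

noncomputable section

namespace GFF

variable (d : ℕ)

variable {Ω : Type} [MeasurableSpace Ω]

/-- Auxiliary: a function dominated by a Gaussian has bounded `lintegral`. -/
lemma lintegral_le_gauss {g : ℝ → ℝ} {C0 AB t : ℝ} (hAB : 0 < AB) (hC0 : 0 ≤ C0)
    (hg : ∀ x, g x ≤ C0 * Real.exp (-(AB * (x - t) ^ 2))) :
    ∫⁻ x, ENNReal.ofReal (g x) ≤ ENNReal.ofReal (C0 * Real.sqrt (π / AB)) := by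
  have hint : Integrable (fun x : ℝ => C0 * Real.exp (-(AB * (x - t) ^ 2))) := by
    have h1 : Integrable (fun x : ℝ => Real.exp (-AB * x ^ 2)) := integrable_exp_neg_mul_sq hAB
    have h2 := h1.comp_sub_right t
    simpa [neg_mul] using h2.const_mul C0
  have hle : ∫⁻ x, ENNReal.ofReal (g x) ≤
      ∫⁻ x, ENNReal.ofReal (C0 * Real.exp (-(AB * (x - t) ^ 2))) :=
    lintegral_mono fun x => ENNReal.ofReal_le_ofReal (hg x)
  refine hle.trans ?_
  rw [← ofReal_integral_eq_lintegral_ofReal hint (ae_of_all _ fun x => by positivity)]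
  apply ENNReal.ofReal_le_ofReal
  rw [integral_const_mul]
  have : ∫ x : ℝ, Real.exp (-(AB * (x - t) ^ 2)) = Real.sqrt (π / AB) := by
    simp_rw [← neg_mul]
    rw [integral_sub_right_eq_self (fun x => Real.exp (-AB * x ^ 2)) t, integral_gaussian]
  rw [this]

/-- Auxiliary: Cauchy–Schwarz splitting off a positive density. -/
lemma holder_bound {f κ ρ : ℝ → ℝ} (hfm : Measurable f) (hκm : Measurable κ)
    (hρm : Measurable ρ) (hρ : ∀ x, 0 < ρ x) (hκ : ∀ x, 0 ≤ κ x) :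
    ∫⁻ x in Ici (0:ℝ), ‖f x * κ x‖₊ ≤
      (∫⁻ x, (‖f x‖₊ : ℝ≥0∞) ^ (2:ℝ) * ENNReal.ofReal (ρ x)) ^ (1/2:ℝ) *
      (∫⁻ x in Ici (0:ℝ), ENNReal.ofReal (κ x ^ 2 / ρ x)) ^ (1/2:ℝ) := by
  set f1 : ℝ → ℝ≥0∞ := fun x => ‖f x‖₊ * ENNReal.ofReal (Real.sqrt (ρ x)) with hf1
  set f2 : ℝ → ℝ≥0∞ := fun x => ENNReal.ofReal (κ x / Real.sqrt (ρ x)) with hf2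
  have hmul : ∀ x, (‖f x * κ x‖₊ : ℝ≥0∞) = f1 x * f2 x := by
    intro x
    have hs : Real.sqrt (ρ x) ≠ 0 := ne_of_gt (Real.sqrt_pos.mpr (hρ x))
    rw [nnnorm_mul, ENNReal.coe_mul, (show (‖κ x‖₊ : ℝ≥0∞) = ENNReal.ofReal (κ x) from Real.enorm_eq_ofReal (hκ x)), hf1, hf2]
    dsimp only
    rw [mul_assoc, ← ENNReal.ofReal_mul (Real.sqrt_nonneg _)]
    congr 2
    rw [mul_comm, div_mul_cancel₀ _ hs]
  have hf1m : Measurable f1 := hfm.enorm.mul (ENNReal.measurable_ofReal.comp hρm.sqrt)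
  have hf2m : Measurable f2 := ENNReal.measurable_ofReal.comp (hκm.div hρm.sqrt)
  have hconj : Real.HolderConjugate 2 2 := Real.HolderConjugate.two_two
  calc ∫⁻ x in Ici (0:ℝ), ‖f x * κ x‖₊
      = ∫⁻ x in Ici (0:ℝ), (f1 * f2) x := by
        refine lintegral_congr fun x => ?_
        rw [Pi.mul_apply, hmul x]
    _ ≤ (∫⁻ x in Ici (0:ℝ), f1 x ^ (2:ℝ)) ^ (1/(2:ℝ)) *
        (∫⁻ x in Ici (0:ℝ), f2 x ^ (2:ℝ)) ^ (1/(2:ℝ)) :=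
        ENNReal.lintegral_mul_le_Lp_mul_Lq _ hconj hf1m.aemeasurable hf2m.aemeasurable
    _ ≤ _ := by
        have h1 : ∫⁻ x in Ici (0:ℝ), f1 x ^ (2:ℝ) ≤
            ∫⁻ x, (‖f x‖₊ : ℝ≥0∞) ^ (2:ℝ) * ENNReal.ofReal (ρ x) := by
          refine (setLIntegral_le_lintegral _ _).trans (le_of_eq (lintegral_congr fun x => ?_))
          rw [hf1]
          dsimp only
          rw [ENNReal.mul_rpow_of_nonneg _ _ (by norm_num : (0:ℝ) ≤ 2),
            ENNReal.ofReal_rpow_of_nonneg (Real.sqrt_nonneg _) (by norm_num : (0:ℝ) ≤ 2),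
            show ((2:ℝ)) = ((2:ℕ):ℝ) by norm_num, Real.rpow_natCast, Real.sq_sqrt (hρ x).le]
        have h2 : ∫⁻ x in Ici (0:ℝ), f2 x ^ (2:ℝ) =
            ∫⁻ x in Ici (0:ℝ), ENNReal.ofReal (κ x ^ 2 / ρ x) := by
          refine lintegral_congr fun x => ?_
          rw [hf2]
          dsimp only
          rw [ENNReal.ofReal_rpow_of_nonneg (div_nonneg (hκ x) (Real.sqrt_nonneg _))
              (by norm_num : (0:ℝ) ≤ 2),
            show ((2:ℝ)) = ((2:ℕ):ℝ) by norm_num, Real.rpow_natCast, div_pow,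
            Real.sq_sqrt (hρ x).le]
        exact mul_le_mul' (ENNReal.rpow_le_rpow h1 (by norm_num))
          (ENNReal.rpow_le_rpow h2.le (by norm_num))

/-- Auxiliary: combining exponentials. -/
lemma exp_combine {c1 c2 u v w q : ℝ} (hsum : u + v = q + w) :
    c1 * Real.exp u * (c2 * Real.exp v) = c1 * c2 * Real.exp q * Real.exp w := by
  rw [mul_mul_mul_comm, ← Real.exp_add, hsum, Real.exp_add]
  ring

set_option maxHeartbeats 1000000 in
/-- Lemma `image_of_H`(a): for all `h, s ∈ ℝ` there is `C_{h,s} < ∞`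
such that for every `f ∈ L²(ν*)`, `‖θ_s H_h[f]‖_{L^{2d}(ν*)} ≤ C_{h,s} ‖f‖_{L²(ν*)}`;
in particular `θ_s H_h[f] ∈ L^{2d}(ν*)`.  Here `(θ_s g)(x) = g(x+s)`. -/
theorem Hop_shift_Lp_bound (d : ℕ) (hd : 2 ≤ d)
    (hstar : ℝ) (χ : ℝ → ℝ) (hcrit : IsCriticalPair d hstar χ) (h s : ℝ) :
    ∃ C : ℝ≥0, ∀ f : ℝ → ℝ, MemLp f 2 (νstar d hstar) →
      MemLp (fun x => Hop d h f (x + s)) ((2 * d : ℕ) : ℝ≥0∞) (νstar d hstar) ∧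
      eLpNorm (fun x => Hop d h f (x + s)) ((2 * d : ℕ) : ℝ≥0∞) (νstar d hstar) ≤
        C * eLpNorm f 2 (νstar d hstar) := by
  clear hcrit
  have hD2 : (2:ℝ) ≤ (d:ℝ) := by exact_mod_cast hd
  have hD0 : (0:ℝ) < (d:ℝ) := by linarith
  have hD0' : ((d:ℝ)) ≠ 0 := ne_of_gt hD0
  have hD1 : (1:ℝ) < (d:ℝ) := by linarith
  have hDm1 : ((d:ℝ)) - 1 ≠ 0 := by intro h0; nlinarith
  have hDp1 : ((d:ℝ)) + 1 ≠ 0 := by positivity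
  have hDsq : ((d:ℝ))^2 + 1 ≠ 0 := by positivity
  have h1d : (1:ℝ≥0) ≤ (d:ℝ≥0) := by
    exact_mod_cast (le_trans one_le_two hd)
  have hvR : ((varRoot d : ℝ≥0) : ℝ) = (d:ℝ) / ((d:ℝ) - 1) := by
    rw [varRoot, NNReal.coe_div, NNReal.coe_sub h1d]
    norm_num
  have hvY : ((varY d : ℝ≥0) : ℝ) = ((d:ℝ) + 1) / (d:ℝ) := by
    rw [varY, NNReal.coe_div, NNReal.coe_add]
    norm_num
  have hvR0 : varRoot d ≠ 0 := by
    intro h0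
    have h1 : (0:ℝ) < ((varRoot d : ℝ≥0) : ℝ) := by
      rw [hvR]; exact div_pos hD0 (by linarith)
    rw [h0] at h1
    simp at h1
  have hμeq : νstar d hstar = volume.withDensity (gaussianPDF (-hstar) (varRoot d)) := by
    rw [νstar, gaussianReal_of_var_ne_zero _ hvR0]
  have hac : (volume : Measure ℝ) ≪ νstar d hstar := by
    rw [νstar]; exact gaussianReal_absolutelyContinuous' _ hvR0
  set ρ : ℝ → ℝ := gaussianPDFReal (-hstar) (varRoot d) with hρdef
  have hρpos : ∀ x, 0 < ρ x := fun x => gaussianPDFReal_pos _ _ _ hvR0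
  have hρm : Measurable ρ := measurable_gaussianPDFReal _ _
  have hρYm : Measurable (ρY d) := measurable_gaussianPDFReal _ _
  have hρYnn : ∀ y, 0 ≤ ρY d y := fun y => gaussianPDFReal_nonneg _ _ _
  -- constants
  set A : ℝ := (d:ℝ) / ((d:ℝ) + 1) with hA
  set B : ℝ := ((d:ℝ) - 1) / (2 * (d:ℝ)) with hB
  set AB : ℝ := ((d:ℝ) ^ 2 + 1) / (2 * (d:ℝ) * ((d:ℝ) + 1)) with hAB
  have hABpos : 0 < AB := by rw [hAB]; positivity
  set β : ℝ := (d:ℝ) * ((d:ℝ) - 1) / ((d:ℝ) ^ 2 + 1) with hβ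
  set k : ℝ := ((d:ℝ) - 1) ^ 3 / (2 * (d:ℝ) * ((d:ℝ) ^ 2 + 1)) with hk
  have hkpos : 0 < k := by
    rw [hk]
    exact div_pos (pow_pos (by linarith) 3) (by positivity)
  set c : ℝ := (((d:ℝ) - 1) / (d:ℝ)) * h with hc
  set CY : ℝ := (Real.sqrt (2 * π * (((d:ℝ) + 1) / (d:ℝ))))⁻¹ with hCY
  set Sρ : ℝ := Real.sqrt (2 * π * ((d:ℝ) / ((d:ℝ) - 1))) with hSρ
  have hSρpos : 0 < Sρ := by
    rw [hSρ]
    apply Real.sqrt_pos.mpr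
    have : (0:ℝ) < (d:ℝ) / ((d:ℝ) - 1) := div_pos hD0 (by linarith)
    positivity
  have hCYnn : 0 ≤ CY := by rw [hCY]; positivity
  -- density formulas
  have hρY_eq : ∀ y, ρY d y = CY * Real.exp (-(A / 2 * y ^ 2)) := by
    intro y
    rw [ρY, gaussianPDFReal, hvY, hCY]
    congr 1
    rw [hA]
    field_simp
    ring
  have hρ_eq : ∀ x, ρ x = Sρ⁻¹ * Real.exp (-(B * (x + hstar) ^ 2)) := by
    intro x
    rw [hρdef, gaussianPDFReal, hvR, hSρ]
    congr 1
    rw [hB]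
    field_simp
    ring
  -- kernel pointwise formula
  have hker : ∀ m x : ℝ, (ρY d (x - m)) ^ 2 / ρ x =
      CY ^ 2 * Sρ * Real.exp (β * (m + hstar) ^ 2) *
        Real.exp (-(AB * (x - (A * m + B * hstar) / AB) ^ 2)) := by
    intro m x
    have hE1 : -(A * (x - m) ^ 2) + B * (x + hstar) ^ 2 =
        β * (m + hstar) ^ 2 + -(AB * (x - (A * m + B * hstar) / AB) ^ 2) := by
      rw [hA, hB, hAB, hβ]
      field_simp
      ring
    have h2 : Real.exp (-(A / 2 * (x - m) ^ 2)) ^ 2 = Real.exp (-(A * (x - m) ^ 2)) := by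
      rw [sq, ← Real.exp_add]
      congr 1
      ring
    rw [hρY_eq, hρ_eq, mul_pow, h2, div_eq_mul_inv, mul_inv, inv_inv]
    rw [show (Real.exp (-(B * (x + hstar) ^ 2)))⁻¹ = Real.exp (B * (x + hstar) ^ 2) by
      rw [← Real.exp_neg, neg_neg]]
    exact exp_combine hE1
  -- the pointwise bound constant
  set C1 : ℝ := CY ^ 2 * Sρ * Real.sqrt (π / AB) with hC1
  have hC1nn : 0 ≤ C1 := by rw [hC1]; positivity
  set CB : ℝ := Real.sqrt C1 with hCB
  have hCBnn : 0 ≤ CB := Real.sqrt_nonneg _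
  -- the dominating function
  set GG : ℝ → ℝ := fun x => CB * Real.exp (β / 2 * ((x + s) / (d:ℝ) - c + hstar) ^ 2) with hGG
  have hGGnn : ∀ x, 0 ≤ GG x := fun x => mul_nonneg hCBnn (Real.exp_pos _).le
  have hGGm : Measurable GG := by
    apply Measurable.const_mul
    apply Real.measurable_exp.comp
    apply Measurable.const_mul
    exact ((((measurable_id.add_const s).div_const _).sub_const c).add_const hstar).pow_const 2
  -- the exponent
  set p : ℝ≥0∞ := ((2 * d : ℕ) : ℝ≥0∞) with hp
  have hp0 : p ≠ 0 := by
    rw [hp]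
    simp only [ne_eq, Nat.cast_eq_zero]
    omega
  have hptop : p ≠ ∞ := by rw [hp]; exact ENNReal.natCast_ne_top _
  have hpreal : p.toReal = ((2 * d : ℕ) : ℝ) := by rw [hp]; simp
  -- finiteness of the dominating function in L^{2d}
  set e : ℝ := s / (d:ℝ) - c + hstar with he
  set u : ℝ := (β * e - B * hstar) / k with hu
  set K2 : ℝ := k * u ^ 2 + (d:ℝ) * β * e ^ 2 - B * hstar ^ 2 with hK2
  have hE2 : ∀ x : ℝ, ((2 * d : ℕ) : ℝ) * (β / 2 * (x / (d:ℝ) + e) ^ 2) +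
      -(B * (x + hstar) ^ 2) = K2 + -(k * (x - u) ^ 2) := by
    intro x
    have h2d : ((2 * d : ℕ) : ℝ) = 2 * (d:ℝ) := by push_cast; ring
    rw [h2d, hK2, hu, hβ, hB, hk]
    field_simp
    ring
  have hGGshift : ∀ x : ℝ, (x + s) / (d:ℝ) - c + hstar = x / (d:ℝ) + e := by
    intro x
    rw [he]
    ring
  have hGGpow : ∀ x : ℝ, GG x ^ (2 * d : ℕ) * ρ x =
      CB ^ (2 * d : ℕ) * Sρ⁻¹ * Real.exp K2 * Real.exp (-(k * (x - u) ^ 2)) := by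
    intro x
    rw [hGG]
    dsimp only
    rw [hGGshift x, hρ_eq, mul_pow, ← Real.exp_nat_mul]
    exact exp_combine (hE2 x)
  have hGlintegral : ∫⁻ x, (‖GG x‖₊ : ℝ≥0∞) ^ p.toReal ∂(νstar d hstar) ≤
      ENNReal.ofReal (CB ^ (2 * d : ℕ) * Sρ⁻¹ * Real.exp K2 * Real.sqrt (π / k)) := by
    rw [hμeq, lintegral_withDensity_eq_lintegral_mul _ (measurable_gaussianPDF _ _)
      (show Measurable fun x => (‖GG x‖₊ : ℝ≥0∞) ^ p.toReal from (hGGm.enorm).pow_const _)]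
    have hpt : ∀ x : ℝ, (gaussianPDF (-hstar) (varRoot d) * fun x =>
        (‖GG x‖₊ : ℝ≥0∞) ^ p.toReal) x = ENNReal.ofReal (GG x ^ (2 * d : ℕ) * ρ x) := by
      intro x
      rw [Pi.mul_apply, show gaussianPDF (-hstar) (varRoot d) x = ENNReal.ofReal (ρ x) from rfl,
        (show (‖GG x‖₊ : ℝ≥0∞) = ENNReal.ofReal (GG x) from Real.enorm_eq_ofReal (hGGnn x)), hpreal,
        ENNReal.ofReal_rpow_of_nonneg (hGGnn x) (Nat.cast_nonneg _),
        Real.rpow_natCast, ← ENNReal.ofReal_mul (hρpos x).le]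
      exact congrArg ENNReal.ofReal (mul_comm _ _)
    rw [lintegral_congr hpt]
    exact lintegral_le_gauss hkpos
      (mul_nonneg (mul_nonneg (pow_nonneg hCBnn _) (inv_nonneg.mpr hSρpos.le))
        (Real.exp_pos _).le)
      (fun x => le_of_eq (hGGpow x))
  have hGfin : eLpNorm GG p (νstar d hstar) < ∞ := by
    rw [eLpNorm_eq_lintegral_rpow_enorm_toReal hp0 hptop]
    refine ENNReal.rpow_lt_top_of_nonneg (by positivity) ?_
    exact (lt_of_le_of_lt hGlintegral ENNReal.ofReal_lt_top).ne
  refine ⟨(eLpNorm GG p (νstar d hstar)).toNNReal, ?_⟩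
  intro f hf
  -- replace f by a strongly measurable representative
  set g : ℝ → ℝ := hf.1.mk f with hgdef
  have hgsm : StronglyMeasurable g := hf.1.stronglyMeasurable_mk
  have hfg : f =ᵐ[νstar d hstar] g := hf.1.ae_eq_mk
  have hfgv : f =ᵐ[volume] g := hac.ae_eq hfg
  have hmemg : MemLp g 2 (νstar d hstar) := hf.ae_eq hfg
  set N : ℝ≥0∞ := eLpNorm g 2 (νstar d hstar) with hN
  have hNf : N = eLpNorm f 2 (νstar d hstar) := (eLpNorm_congr_ae hfg).symm
  have hNtop : N ≠ ∞ := hmemg.2.ne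
  have hHeq : Hop d h f = Hop d h g := by
    funext b
    rw [Hop, Hop]
    by_cases hb : b ∈ Ici (0:ℝ)
    · rw [Set.indicator_of_mem hb, Set.indicator_of_mem hb]
      refine integral_congr_ae (ae_restrict_of_ae (hfgv.mono fun x hx => ?_))
      dsimp only
      rw [hx]
    · rw [Set.indicator_of_notMem hb, Set.indicator_of_notMem hb]
  -- measurability of Hop g
  have hSM : StronglyMeasurable (Hop d h g) := by
    have hF : StronglyMeasurable (fun q : ℝ × ℝ =>
        g q.2 * ρY d (q.2 - q.1 / (d:ℝ) + (((d:ℝ) - 1) / (d:ℝ)) * h)) := by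
      apply Measurable.stronglyMeasurable
      exact (hgsm.measurable.comp measurable_snd).mul (hρYm.comp
        (((measurable_snd.sub (measurable_fst.div_const _)).add_const _)))
    have hI := hF.integral_prod_right' (ν := volume.restrict (Ici (0:ℝ)))
    exact hI.indicator measurableSet_Ici
  have hSMs : AEStronglyMeasurable (fun x => Hop d h g (x + s)) (νstar d hstar) :=
    (hSM.comp_measurable (measurable_add_const s)).aestronglyMeasurable
  -- the key pointwise bound
  have key : ∀ b : ℝ, (‖Hop d h g b‖₊ : ℝ≥0∞) ≤
      N * ENNReal.ofReal (CB * Real.exp (β / 2 * (b / (d:ℝ) - c + hstar) ^ 2)) := by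
    intro b
    by_cases hb : b ∈ Ici (0:ℝ)
    · set m : ℝ := b / (d:ℝ) - c with hm
      have hHb : Hop d h g b = ∫ x in Ici (0:ℝ), g x * ρY d (x - m) := by
        rw [Hop, Set.indicator_of_mem hb]
        refine integral_congr_ae (ae_of_all _ fun x => ?_)
        dsimp only
        have harg : x - b / (d:ℝ) + ((d:ℝ) - 1) / (d:ℝ) * h = x - m := by
          rw [hm, hc]; ring
        rw [harg]
      rw [hHb]
      refine le_trans (enorm_integral_le_lintegral_enorm _) ?_
      refine le_trans (holder_bound hgsm.measurable (hρYm.comp (measurable_id.sub_const m))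
        hρm hρpos (fun x => hρYnn _)) ?_
      have hfac1 : (∫⁻ x, (‖g x‖₊ : ℝ≥0∞) ^ (2:ℝ) * ENNReal.ofReal (ρ x)) ^ (1/2:ℝ) = N := by
        rw [hN, eLpNorm_eq_lintegral_rpow_enorm_toReal two_ne_zero ENNReal.ofNat_ne_top, hμeq,
          lintegral_withDensity_eq_lintegral_mul _ (measurable_gaussianPDF _ _)
            (hgsm.measurable.enorm.pow_const _)]
        simp only [ENNReal.toReal_ofNat]
        congr 1
        refine lintegral_congr fun x => ?_
        rw [Pi.mul_apply, mul_comm]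
        rfl
      have hb1 : ∫⁻ x in Ici (0:ℝ), ENNReal.ofReal ((fun x => ρY d (x - m)) x ^ 2 / ρ x) ≤
          ENNReal.ofReal (C1 * Real.exp (β * (m + hstar) ^ 2)) := by
        refine le_trans (setLIntegral_le_lintegral _ _) ?_
        have hgauss := lintegral_le_gauss (g := fun x => ρY d (x - m) ^ 2 / ρ x)
          (C0 := CY ^ 2 * Sρ * Real.exp (β * (m + hstar) ^ 2))
          (t := (A * m + B * hstar) / AB) hABpos
          (mul_nonneg (mul_nonneg (sq_nonneg CY) hSρpos.le) (Real.exp_pos _).le)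
          (fun x => le_of_eq (hker m x))
        refine le_trans (le_of_eq (lintegral_congr fun x => rfl))
          (hgauss.trans (le_of_eq ?_))
        exact congrArg ENNReal.ofReal (by rw [hC1]; ring)
      have hfac2 : (∫⁻ x in Ici (0:ℝ),
          ENNReal.ofReal ((fun x => ρY d (x - m)) x ^ 2 / ρ x)) ^ (1/2:ℝ) ≤
          ENNReal.ofReal (CB * Real.exp (β / 2 * (m + hstar) ^ 2)) := by
        refine le_trans (ENNReal.rpow_le_rpow hb1 (by norm_num)) (le_of_eq ?_)
        rw [ENNReal.ofReal_rpow_of_nonneg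
          (mul_nonneg hC1nn (Real.exp_pos _).le) (by norm_num : (0:ℝ) ≤ 1/2)]
        refine congrArg ENNReal.ofReal ?_
        rw [Real.mul_rpow hC1nn (Real.exp_pos _).le, hCB, Real.sqrt_eq_rpow, ← Real.exp_mul,
          show β * (m + hstar) ^ 2 * (1/2) = β / 2 * (m + hstar) ^ 2 by ring]
      rw [hfac1]
      exact mul_le_mul_right hfac2 N
    · rw [Hop, Set.indicator_of_notMem hb]
      simp
  -- conclude
  have hptw : ∀ x : ℝ, ‖Hop d h g (x + s)‖ ≤ ‖N.toReal * GG x‖ := by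
    intro x
    have h1 := key (x + s)
    have h2 : N * ENNReal.ofReal (CB * Real.exp (β / 2 * ((x + s) / (d:ℝ) - c + hstar) ^ 2)) =
        ENNReal.ofReal (N.toReal * GG x) := by
      rw [ENNReal.ofReal_mul ENNReal.toReal_nonneg, ENNReal.ofReal_toReal hNtop, hGG]
    rw [h2, ← (show ENNReal.ofReal ‖Hop d h g (x + s)‖ = (‖Hop d h g (x + s)‖₊ : ℝ≥0∞) from ofReal_norm _)] at h1
    have h3 : ‖Hop d h g (x + s)‖ ≤ N.toReal * GG x :=
      (ENNReal.ofReal_le_ofReal_iff (mul_nonneg ENNReal.toReal_nonneg (hGGnn x))).mp h1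
    exact h3.trans (le_abs_self _)
  have hmono : eLpNorm (fun x => Hop d h g (x + s)) p (νstar d hstar) ≤
      eLpNorm GG p (νstar d hstar) * N := by
    calc eLpNorm (fun x => Hop d h g (x + s)) p (νstar d hstar)
        ≤ eLpNorm (fun x => N.toReal * GG x) p (νstar d hstar) := eLpNorm_mono hptw
      _ = ‖N.toReal‖₊ * eLpNorm GG p (νstar d hstar) := by
          rw [show (fun x => N.toReal * GG x) = N.toReal • GG from rfl]
          exact eLpNorm_const_smul _ _ _ _
      _ = eLpNorm GG p (νstar d hstar) * N := by
          rw [mul_comm]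
          congr 1
          rw [← (show ENNReal.ofReal ‖N.toReal‖ = (‖N.toReal‖₊ : ℝ≥0∞) from ofReal_norm _), Real.norm_of_nonneg ENNReal.toReal_nonneg,
            ENNReal.ofReal_toReal hNtop]
  have hfin : eLpNorm (fun x => Hop d h f (x + s)) p (νstar d hstar) ≤
      eLpNorm GG p (νstar d hstar) * N := by
    rw [show (fun x => Hop d h f (x + s)) = fun x => Hop d h g (x + s) by
      funext x; rw [hHeq]]
    exact hmono
  constructor
  · refine ⟨?_, lt_of_le_of_lt hfin (ENNReal.mul_lt_top hGfin hNtop.lt_top)⟩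
    refine AEStronglyMeasurable.congr hSMs ?_
    filter_upwards [] with x
    rw [hHeq]
  · refine hfin.trans ?_
    rw [ENNReal.coe_toNNReal hGfin.ne, hNf]

end GFF
end
end
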